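/- arXiv:1507.00151 — 11 statements merged into one kernel-verified Lean document; each statement's English description precedes it below -/
import Mathlib

section
/- Let X be a complex Banach space and let S and T be compact linear operators on X. Let z ∈ ρ(T) be a point of the resolvent set of T and assume ‖(T−S)∘S‖ · ‖(z·I−T)⁻¹‖ < |z|. Then z ∈ ρ(S), and the inverse satisfies the bound ‖(z·I−S)⁻¹‖ ≤ (1 + ‖S‖·‖(z·I−T)⁻¹‖) / (|z| − ‖(z·I−T)⁻¹‖·‖(T−S)∘S‖). -/
open ContinuousLinearMap Metric

lemma aux_fredholm_surj {X : Type*} [NormedAddCommGroup X] [NormedSpace ℂ X] [CompleteSpace X]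
    (K : X →L[ℂ] X) (hK : IsCompactOperator ⇑K) {c : ℝ} (hc : 0 < c)
    (hb : ∀ x, c * ‖x‖ ≤ ‖x - K x‖) : Function.Surjective ⇑(1 - K : X →L[ℂ] X) := by
  set f : X →L[ℂ] X := 1 - K with hf
  have hfx : ∀ x, f x = x - K x := fun x => by simp [hf]
  have hanti : AntilipschitzWith c.toNNReal⁻¹ f := by
    apply f.antilipschitz_of_bound
    intro x
    have := hb x
    rw [← hfx] at this
    rw [NNReal.coe_inv, Real.coe_toNNReal _ hc.le]
    calc ‖x‖ = c⁻¹ * (c * ‖x‖) := by field_simp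
      _ ≤ c⁻¹ * ‖f x‖ := by gcongr
  have hinj : Function.Injective ⇑f := hanti.injective
  by_contra hsurj
  rw [Function.Surjective] at hsurj
  push_neg at hsurj
  obtain ⟨y₀, hy₀⟩ := hsurj
  -- the chain of subspaces
  set Xn : ℕ → Submodule ℂ X := fun n => Nat.rec (motive := fun _ => Submodule ℂ X) ⊤ (fun _ Y => Y.map (f : X →ₗ[ℂ] X)) n with hXn
  have hXsucc : ∀ n, Xn (n + 1) = (Xn n).map (f : X →ₗ[ℂ] X) := fun n => rfl
  have hmono : ∀ n, Xn (n + 1) ≤ Xn n := by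
    intro n
    induction n with
    | zero => exact le_top
    | succ n ih =>
      show (Xn (n + 1)).map (f : X →ₗ[ℂ] X) ≤ (Xn n).map (f : X →ₗ[ℂ] X)
      exact Submodule.map_mono ih
  have hanti' : Antitone Xn := antitone_nat_of_succ_le hmono
  have hclosed : ∀ n, IsClosed (Xn n : Set X) := by
    intro n
    induction n with
    | zero =>
      rw [show Xn 0 = ⊤ from rfl, Submodule.top_coe]
      exact isClosed_univ
    | succ n ih =>
      have : CompleteSpace (Xn n) := by haveI : Fact (IsClosed (Xn n : Set X)) := ⟨ih⟩; exact IsClosed.completeSpace_coe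
      set g : (Xn n) →L[ℂ] X := f.comp (Xn n).subtypeL with hg
      have hganti : AntilipschitzWith (1 * c.toNNReal⁻¹) ⇑g :=
        hanti.comp (isometry_subtype_coe).antilipschitz
      have hcl : IsClosed (Set.range ⇑g) := hganti.isClosed_range g.uniformContinuous
      have : Set.range ⇑g = ((Xn n).map (f : X →ₗ[ℂ] X) : Set X) := by
        ext y
        simp [hg, Submodule.mem_map, Set.range_comp]
      show IsClosed (((Xn n).map (f : X →ₗ[ℂ] X) : Submodule ℂ X) : Set X)
      rwa [this] at hcl
  have hstrict : ∀ n, ∃ x, x ∈ Xn n ∧ x ∉ Xn (n + 1) := by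
    intro n
    induction n with
    | zero =>
      refine ⟨y₀, trivial, fun h => ?_⟩
      obtain ⟨x, -, hx⟩ := Submodule.mem_map.mp (show y₀ ∈ (Xn 0).map (f : X →ₗ[ℂ] X) from h)
      exact hy₀ x hx
    | succ n ih =>
      obtain ⟨x, hx, hx'⟩ := ih
      refine ⟨f x, ⟨x, hx, rfl⟩, fun h => ?_⟩
      obtain ⟨x', hx'', hxx⟩ := Submodule.mem_map.mp (show f x ∈ (Xn (n + 1)).map (f : X →ₗ[ℂ] X) from h)
      exact hx' (hinj hxx ▸ hx'')
  -- Riesz sequence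
  have hriesz : ∀ n, ∃ u : X, u ∈ Xn n ∧ ‖u‖ ≤ 3 ∧ ∀ y ∈ Xn (n + 1), 1 ≤ ‖u - y‖ := by
    intro n
    set F : Submodule ℂ (Xn n) := (Xn (n + 1)).comap (Xn n).subtype with hF
    have hFc : IsClosed (F : Set (Xn n)) := by
      have : (F : Set (Xn n)) = ((↑) : (Xn n) → X) ⁻¹' (Xn (n + 1) : Set X) := rfl
      rw [this]
      exact (hclosed (n + 1)).preimage continuous_subtype_val
    obtain ⟨x, hx, hx'⟩ := hstrict n
    have hFne : ∃ v : (Xn n), v ∉ F := ⟨⟨x, hx⟩, by simpa [hF] using hx'⟩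
    have h2 : (1 : ℝ) < ‖(2 : ℂ)‖ := by norm_num
    have h23 : ‖(2 : ℂ)‖ < (3 : ℝ) := by norm_num
    obtain ⟨u, hu3, husep⟩ := riesz_lemma_of_norm_lt h2 h23 hFc hFne
    refine ⟨↑u, u.2, hu3, fun y hy => ?_⟩
    have hyn : y ∈ Xn n := hmono n hy
    have := husep ⟨y, hyn⟩ (by simpa [hF] using hy)
    simpa using this
  choose u hu1 hu2 hu3 using hriesz
  -- separation of K (u n)
  have hsep : ∀ n m, n < m → 1 ≤ ‖K (u n) - K (u m)‖ := by
    intro n m hnm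
    have hms : ∀ (k : ℕ) (v : X), v ∈ Xn k → f v ∈ Xn (k + 1) := fun k v hv =>
      show f v ∈ (Xn k).map (f : X →ₗ[ℂ] X) from Submodule.mem_map.mpr ⟨v, hv, rfl⟩
    have h1 : f (u n) ∈ Xn (n + 1) := hms n _ (hu1 n)
    have h2 : u m ∈ Xn (n + 1) := hanti' hnm (hu1 m)
    have h3 : f (u m) ∈ Xn (n + 1) :=
      hanti' (show n + 1 ≤ m + 1 by omega) (hms m _ (hu1 m))
    have hy : f (u n) + u m - f (u m) ∈ Xn (n + 1) :=
      Submodule.sub_mem _ (Submodule.add_mem _ h1 h2) h3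
    have := hu3 n _ hy
    have heq : u n - (f (u n) + u m - f (u m)) = K (u n) - K (u m) := by
      rw [hfx, hfx]; abel
    rwa [heq] at this
  -- compactness contradiction
  obtain ⟨M, hM, hMsub⟩ := hK.image_closedBall_subset_compact 3
  have hmem : ∀ n, K (u n) ∈ M := fun n =>
    hMsub ⟨u n, by simpa [mem_closedBall, dist_zero_right] using hu2 n, rfl⟩
  obtain ⟨L, -, φ, hφ, hconv⟩ := hM.tendsto_subseq hmem
  obtain ⟨N, hN⟩ := Metric.tendsto_atTop.mp hconv (1 / 2) (by norm_num)
  have hlt : φ N < φ (N + 1) := hφ (Nat.lt_succ_self N)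
  have hge1 := hsep _ _ hlt
  have d1 := hN N le_rfl
  have d2 := hN (N + 1) (Nat.le_succ N)
  have : dist (K (u (φ N))) (K (u (φ (N + 1)))) < 1 := by
    calc dist (K (u (φ N))) (K (u (φ (N + 1))))
        ≤ dist (K (u (φ N))) L + dist (K (u (φ (N + 1)))) L := dist_triangle_right _ _ _
      _ < 1 / 2 + 1 / 2 := by exact add_lt_add d1 d2
      _ = 1 := by norm_num
  rw [dist_eq_norm] at this
  linarith

/-- Let `X` be a complex Banach space and `S`, `T` compact linear
operators on `X`. If `z ∈ ρ(T)` and `‖(T−S)∘S‖ · ‖(z·I−T)⁻¹‖ < |z|`, then `z ∈ ρ(S)`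
and `‖(z·I−S)⁻¹‖ ≤ (1 + ‖S‖·‖(z·I−T)⁻¹‖) / (|z| − ‖(z·I−T)⁻¹‖·‖(T−S)∘S‖)`. -/
theorem stmt0 {X : Type*} [NormedAddCommGroup X] [NormedSpace ℂ X] [CompleteSpace X]
    (S T : X →L[ℂ] X) (hS : IsCompactOperator ⇑S) (hT : IsCompactOperator ⇑T)
    (z : ℂ) (hz : z ∈ resolventSet ℂ T)
    (hbound : ‖(T - S).comp S‖ * ‖resolvent T z‖ < ‖z‖) :
    z ∈ resolventSet ℂ S ∧
      ‖resolvent S z‖ ≤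
        (1 + ‖S‖ * ‖resolvent T z‖) / (‖z‖ - ‖resolvent T z‖ * ‖(T - S).comp S‖) := by
  classical
  have hz' : IsUnit (algebraMap ℂ (X →L[ℂ] X) z - T) := hz
  set R : X →L[ℂ] X := resolvent T z with hRdef
  have hl : R * (algebraMap ℂ (X →L[ℂ] X) z - T) = 1 := Ring.inverse_mul_cancel _ hz'
  set b : X →L[ℂ] X := algebraMap ℂ (X →L[ℂ] X) z - S with hbdef
  have hRz : R * algebraMap ℂ (X →L[ℂ] X) z = 1 + R * T := by
    rw [mul_sub, sub_eq_iff_eq_add] at hl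
    exact hl
  -- key algebraic identity
  have key : (1 + R * S) * b = algebraMap ℂ (X →L[ℂ] X) z + R * ((T - S) * S) := by
    rw [hbdef]
    calc (1 + R * S) * (algebraMap ℂ (X →L[ℂ] X) z - S)
        = algebraMap ℂ (X →L[ℂ] X) z - S + R * (S * algebraMap ℂ (X →L[ℂ] X) z)
            - R * (S * S) := by noncomm_ring
      _ = algebraMap ℂ (X →L[ℂ] X) z - S + R * (algebraMap ℂ (X →L[ℂ] X) z * S)
            - R * (S * S) := by rw [← Algebra.commutes]
      _ = algebraMap ℂ (X →L[ℂ] X) z - S + (1 + R * T) * S - R * (S * S) := by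
            rw [← mul_assoc, hRz]
      _ = algebraMap ℂ (X →L[ℂ] X) z + R * ((T - S) * S) := by noncomm_ring
  have happ : ∀ x : X, (1 + R * S) (b x) = z • x + (R * ((T - S) * S)) x := by
    intro x
    conv_lhs => rw [← ContinuousLinearMap.mul_apply, key]
    rw [ContinuousLinearMap.add_apply]
    simp [Algebra.algebraMap_eq_smul_one]
  set c : ℝ := ‖z‖ - ‖R‖ * ‖(T - S).comp S‖ with hcdef
  set d : ℝ := 1 + ‖S‖ * ‖R‖ with hddef
  have hc : 0 < c := by
    have : ‖(T - S).comp S‖ * ‖R‖ = ‖R‖ * ‖(T - S).comp S‖ := mul_comm _ _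
    rw [hcdef]; linarith [hbound, this]
  have hd : 0 < d := by positivity
  have hcomp : (T - S) * S = (T - S).comp S := rfl
  -- pointwise estimate
  have hpt : ∀ x : X, c * ‖x‖ ≤ d * ‖b x‖ := by
    intro x
    have h2 : z • x = (1 + R * S) (b x) - (R * ((T - S) * S)) x := by
      rw [happ x]; abel
    have e1 : ‖z‖ * ‖x‖ ≤ ‖1 + R * S‖ * ‖b x‖ + ‖R * ((T - S) * S)‖ * ‖x‖ := by
      calc ‖z‖ * ‖x‖ = ‖z • x‖ := (norm_smul z x).symm
        _ = ‖(1 + R * S) (b x) - (R * ((T - S) * S)) x‖ := by rw [h2]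
        _ ≤ ‖(1 + R * S) (b x)‖ + ‖(R * ((T - S) * S)) x‖ := norm_sub_le _ _
        _ ≤ ‖1 + R * S‖ * ‖b x‖ + ‖R * ((T - S) * S)‖ * ‖x‖ :=
            add_le_add (ContinuousLinearMap.le_opNorm _ _)
              (ContinuousLinearMap.le_opNorm _ _)
    have e2 : ‖1 + R * S‖ ≤ d := by
      calc ‖1 + R * S‖ ≤ ‖(1 : X →L[ℂ] X)‖ + ‖R * S‖ := norm_add_le _ _
        _ ≤ 1 + ‖R‖ * ‖S‖ :=
            add_le_add ContinuousLinearMap.norm_id_le (norm_mul_le _ _)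
        _ = d := by rw [hddef, mul_comm]
    have e3 : ‖R * ((T - S) * S)‖ ≤ ‖R‖ * ‖(T - S).comp S‖ := by
      rw [← hcomp]; exact norm_mul_le _ _
    nlinarith [norm_nonneg x, norm_nonneg (b x), ContinuousLinearMap.opNorm_nonneg (1 + R * S)]
  -- injectivity
  have hinj : Function.Injective ⇑b := by
    intro x y hxy
    have hx : b (x - y) = 0 := by rw [map_sub, hxy, sub_self]
    have := hpt (x - y)
    rw [hx, norm_zero, mul_zero] at this
    have : ‖x - y‖ ≤ 0 := by nlinarith
    have := le_antisymm this (norm_nonneg _)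
    rwa [norm_eq_zero, sub_eq_zero] at this
  -- surjectivity via the Fredholm lemma
  have hz0 : z ≠ 0 := by
    intro h
    rw [h, norm_zero] at hbound
    nlinarith [norm_nonneg ((T - S).comp S), norm_nonneg R]
  have hznorm : (0 : ℝ) < ‖z‖ := norm_pos_iff.mpr hz0
  set K : X →L[ℂ] X := z⁻¹ • S with hKdef
  have hKc : IsCompactOperator ⇑K := by
    have := hS.smul (z⁻¹ : ℂ)
    rwa [show (z⁻¹ • ⇑S) = ⇑K from rfl] at this
  have hfeq : ∀ x : X, x - K x = z⁻¹ • b x := by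
    intro x
    rw [hbdef]
    simp only [ContinuousLinearMap.sub_apply, ContinuousLinearMap.smul_apply,
      Algebra.algebraMap_eq_smul_one, ContinuousLinearMap.one_apply]
    rw [smul_sub, smul_smul, inv_mul_cancel₀ hz0, one_smul]
    rfl
  have hc' : (0 : ℝ) < ‖z‖⁻¹ * (c / d) := by positivity
  have hbelow : ∀ x : X, ‖z‖⁻¹ * (c / d) * ‖x‖ ≤ ‖x - K x‖ := by
    intro x
    rw [hfeq x, norm_smul, norm_inv]
    have := hpt x
    rw [mul_assoc]
    gcongr
    rw [div_mul_eq_mul_div, div_le_iff₀ hd]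
    linarith [hpt x, mul_comm (d : ℝ) ‖b x‖]
  have hsurjK := aux_fredholm_surj K hKc hc' hbelow
  have hsurj : Function.Surjective ⇑b := by
    intro y
    obtain ⟨x, hx⟩ := hsurjK (z⁻¹ • y)
    refine ⟨x, ?_⟩
    have hx' : x - K x = z⁻¹ • y := by
      rw [← hx]; simp
    rw [hfeq x] at hx'
    have := congrArg (fun v => z • v) hx'
    simpa [smul_smul, mul_inv_cancel₀ hz0] using this
  -- z ∈ resolventSet S
  have hker : LinearMap.ker (b : X →ₗ[ℂ] X) = ⊥ := LinearMap.ker_eq_bot (f := (b : X →ₗ[ℂ] X)).mpr hinj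
  have hrange : LinearMap.range (b : X →ₗ[ℂ] X) = ⊤ := LinearMap.range_eq_top (f := (b : X →ₗ[ℂ] X)).mpr hsurj
  set e := ContinuousLinearEquiv.ofBijective b hker hrange with hedef
  have hunit : IsUnit b := by
    refine ⟨⟨b, (e.symm : X →L[ℂ] X), ?_, ?_⟩, rfl⟩
    · ext x
      simp only [ContinuousLinearMap.mul_apply, ContinuousLinearMap.one_apply,
        ContinuousLinearMap.coe_coe]
      exact ContinuousLinearEquiv.ofBijective_apply_symm_apply b hker hrange x
    · ext x
      simp only [ContinuousLinearMap.mul_apply, ContinuousLinearMap.one_apply,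
        ContinuousLinearMap.coe_coe]
      exact ContinuousLinearEquiv.ofBijective_symm_apply_apply b hker hrange x
  have hmem : z ∈ resolventSet ℂ S := hunit
  refine ⟨hmem, ?_⟩
  -- the norm bound
  have hbres : b * resolvent S z = 1 := by
    rw [resolvent, ← hbdef]
    exact Ring.mul_inverse_cancel _ hunit
  have hres : ∀ y : X, b (resolvent S z y) = y := by
    intro y
    have := congrArg (fun A : X →L[ℂ] X => A y) hbres
    simpa [ContinuousLinearMap.mul_apply] using this
  have : ‖resolvent S z‖ ≤ d / c := by
    refine ContinuousLinearMap.opNorm_le_bound _ (by positivity) fun y => ?_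
    have h1 := hpt (resolvent S z y)
    rw [hres y] at h1
    rw [div_mul_eq_mul_div, le_div_iff₀ hc]
    nlinarith [h1]
  exact this
end

section
/- Let X be a complex Banach space and let S and T be compact linear operators on X. Then the spectrum of S satisfies σ(S) ⊆ {0} ∪ σ(T) ∪ {z ∈ ρ(T) : |z| ≤ ‖(z·I−T)⁻¹‖ · ‖(T−S)∘S‖}. -/
open Metric Filter

/-- If `S` is compact, `z ≠ 0`, and `A := z•1 - S` has a left inverse, then `A` is
surjective (Riesz theory). -/
lemma aux_surj {X : Type*} [NormedAddCommGroup X] [NormedSpace ℂ X] [CompleteSpace X]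
    (S : X →L[ℂ] X) (hS : IsCompactOperator ⇑S) {z : ℂ} (hz : z ≠ 0)
    (U : X →L[ℂ] X) (hU : U * (z • (1 : X →L[ℂ] X) - S) = 1) :
    Function.Surjective (z • (1 : X →L[ℂ] X) - S) := by
  set A : X →L[ℂ] X := z • 1 - S with hA
  by_contra hsurj
  have hUn : ∀ n : ℕ, U ^ n * A ^ n = 1 := by
    intro n; induction n with
    | zero => simp
    | succ n ih =>
      rw [pow_succ, pow_succ', mul_assoc, ← mul_assoc U, hU, one_mul, ih]
  have hli : ∀ (n : ℕ) (w : X), (U ^ n) ((A ^ n) w) = w := fun n w => by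
    rw [← ContinuousLinearMap.mul_apply, hUn, ContinuousLinearMap.one_apply]
  have hinj : ∀ n : ℕ, Function.Injective ⇑(A ^ n : X →L[ℂ] X) :=
    fun n => Function.LeftInverse.injective (hli n)
  have hanti : ∀ n : ℕ, AntilipschitzWith ‖(U ^ n : X →L[ℂ] X)‖₊ ⇑(A ^ n : X →L[ℂ] X) := by
    intro n
    apply ContinuousLinearMap.antilipschitz_of_bound (A ^ n)
    intro x
    conv_lhs => rw [← hli n x]
    exact (U ^ n).le_opNorm _
  set Y : ℕ → Submodule ℂ X := fun n => LinearMap.range ((A ^ n : X →L[ℂ] X) : X →ₗ[ℂ] X) with hY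
  have hclosed : ∀ n, IsClosed ((Y n : Submodule ℂ X) : Set X) := by
    intro n
    have h1 := (hanti n).isClosed_range (A ^ n).uniformContinuous
    have h2 : ((Y n : Submodule ℂ X) : Set X) = Set.range ⇑(A ^ n : X →L[ℂ] X) :=
      LinearMap.coe_range _
    rwa [h2]
  have hmono : ∀ {n m : ℕ}, n ≤ m → Y m ≤ Y n := by
    intro n m hnm
    rintro _ ⟨u, rfl⟩
    obtain ⟨k, rfl⟩ := Nat.exists_eq_add_of_le hnm
    exact ⟨(A ^ k) u, by simp only [ContinuousLinearMap.coe_coe]; rw [← ContinuousLinearMap.mul_apply, ← pow_add]⟩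
  have hproper : ∀ n : ℕ, ∃ x, x ∈ Y n ∧ x ∉ Y (n + 1) := by
    intro n
    by_contra h
    push_neg at h
    apply hsurj
    intro v
    obtain ⟨w, hw⟩ := h ((A ^ n) v) ⟨v, rfl⟩
    refine ⟨w, hinj n ?_⟩
    rw [← ContinuousLinearMap.mul_apply, ← pow_succ]
    exact hw
  have hsep : ∀ n : ℕ, ∃ x : X, x ∈ Y n ∧ ‖x‖ = 1 ∧
      ∀ w ∈ Y (n + 1), (1 : ℝ) / 2 ≤ ‖x - w‖ := by
    intro n
    obtain ⟨x, hxn, hxn1⟩ := hproper n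
    have hne : ((Y (n + 1) : Submodule ℂ X) : Set X).Nonempty := ⟨0, Submodule.zero_mem _⟩
    have hd : 0 < infDist x (Y (n + 1) : Set X) :=
      ((hclosed (n + 1)).notMem_iff_infDist_pos hne).mp hxn1
    set d := infDist x (Y (n + 1) : Set X) with hdd
    obtain ⟨y, hy, hxy⟩ := (infDist_lt_iff hne).mp (show d < 2 * d by linarith)
    set v := x - y with hv
    have hvY : v ∈ Y n := Submodule.sub_mem _ hxn (hmono n.le_succ hy)
    have hdv : d ≤ ‖v‖ := by
      have := infDist_le_dist_of_mem (x := x) hy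
      rwa [dist_eq_norm] at this
    have hvpos : 0 < ‖v‖ := lt_of_lt_of_le hd hdv
    have hvlt : ‖v‖ < 2 * d := by rwa [hv, ← dist_eq_norm]
    refine ⟨((‖v‖ : ℂ))⁻¹ • v, Submodule.smul_mem _ _ hvY, ?_, ?_⟩
    · rw [norm_smul, norm_inv]
      simp [Complex.norm_real, inv_mul_cancel₀ hvpos.ne']
    · intro w hw
      have hw' : y + (‖v‖ : ℂ) • w ∈ (Y (n + 1) : Set X) :=
        Submodule.add_mem _ hy (Submodule.smul_mem _ _ hw)
      have key : d ≤ ‖v - (‖v‖ : ℂ) • w‖ := by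
        have h1 : d ≤ dist x (y + (‖v‖ : ℂ) • w) := infDist_le_dist_of_mem (x := x) hw'
        have h2 : x - (y + (‖v‖ : ℂ) • w) = v - (‖v‖ : ℂ) • w := by rw [hv]; abel
        rwa [dist_eq_norm, h2] at h1
      have hvne : (‖v‖ : ℂ) ≠ 0 := by exact_mod_cast hvpos.ne'
      have heq : ((‖v‖ : ℂ))⁻¹ • v - w = ((‖v‖ : ℂ))⁻¹ • (v - (‖v‖ : ℂ) • w) := by
        match_scalars <;> field_simp
      rw [heq, norm_smul, norm_inv]
      have hnv : ‖((‖v‖ : ℝ) : ℂ)‖ = ‖v‖ := by simp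
      rw [hnv]
      have : (1 : ℝ) / 2 * ‖v‖ ≤ ‖v - (‖v‖ : ℂ) • w‖ := by nlinarith
      calc (1 : ℝ) / 2 = ‖v‖⁻¹ * ((1 : ℝ) / 2 * ‖v‖) := by
            field_simp
        _ ≤ ‖v‖⁻¹ * ‖v - (‖v‖ : ℂ) • w‖ := by
            apply mul_le_mul_of_nonneg_left this (by positivity)
  choose xs hxsY hxs1 hxssep using hsep
  have hAim : ∀ n : ℕ, A (xs n) ∈ Y (n + 1) := by
    intro n
    obtain ⟨u, hu⟩ := hxsY n
    exact ⟨u, by rw [← hu]; simp only [ContinuousLinearMap.coe_coe]; rw [← ContinuousLinearMap.mul_apply, ← pow_succ']⟩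
  have hstep : ∀ {n m : ℕ}, n < m → ‖z‖ / 2 ≤ ‖S (xs n) - S (xs m)‖ := by
    intro n m hnm
    have hSv : ∀ v : X, S v = z • v - A v := fun v => by
      simp [hA, sub_sub_cancel]
    set w : X := xs m + z⁻¹ • A (xs n) - z⁻¹ • A (xs m) with hw
    have hwY : w ∈ Y (n + 1) := by
      refine Submodule.sub_mem _ (Submodule.add_mem _ ?_ ?_) ?_
      · exact hmono hnm (hxsY m)
      · exact Submodule.smul_mem _ _ (hAim n)
      · exact Submodule.smul_mem _ _ (hmono (Nat.succ_le_succ hnm.le) (hAim m))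
    have hkey : S (xs n) - S (xs m) = z • (xs n - w) := by
      rw [hSv, hSv, hw]
      match_scalars <;> field_simp
    rw [hkey, norm_smul]
    have h12 := hxssep n w hwY
    calc ‖z‖ / 2 = ‖z‖ * (1 / 2) := by ring
      _ ≤ ‖z‖ * ‖xs n - w‖ := mul_le_mul_of_nonneg_left h12 (norm_nonneg z)
  -- compactness contradiction
  have hS' : IsCompactOperator ⇑(S.toLinearMap) := hS
  have hK : IsCompact (closure (⇑S '' Metric.closedBall 0 1)) := by
    have := hS'.isCompact_closure_image_closedBall (𝕜₁ := ℂ) 1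
    exact this
  have hmem : ∀ n : ℕ, S (xs n) ∈ closure (⇑S '' Metric.closedBall 0 1) := by
    intro n
    apply subset_closure
    exact ⟨xs n, by simp [mem_closedBall, dist_eq_norm, hxs1 n], rfl⟩
  obtain ⟨a, -, φ, hφ, hconv⟩ := hK.tendsto_subseq hmem
  have hzpos : (0 : ℝ) < ‖z‖ / 4 := by
    have : (0:ℝ) < ‖z‖ := norm_pos_iff.mpr hz
    linarith
  obtain ⟨N, hN⟩ := (Metric.tendsto_atTop.mp hconv) (‖z‖ / 4) hzpos
  have h1 := hN N le_rfl
  have h2 := hN (N + 1) (Nat.le_succ N)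
  have hlt : dist (S (xs (φ N))) (S (xs (φ (N + 1)))) < ‖z‖ / 2 := by
    calc dist (S (xs (φ N))) (S (xs (φ (N + 1))))
        ≤ dist (S (xs (φ N))) a + dist (S (xs (φ (N + 1)))) a := dist_triangle_right _ _ _
      _ < ‖z‖ / 4 + ‖z‖ / 4 := add_lt_add h1 h2
      _ = ‖z‖ / 2 := by ring
  have hge := hstep (hφ (Nat.lt_succ_self N))
  rw [dist_eq_norm] at hlt
  linarith

/-- Let `X` be a complex Banach space and `S`, `T` compact linear
operators on `X`. Then
`σ(S) ⊆ {0} ∪ σ(T) ∪ {z ∈ ρ(T) : |z| ≤ ‖(z·I−T)⁻¹‖·‖(T−S)∘S‖}`. -/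
theorem stmt2 {X : Type*} [NormedAddCommGroup X] [NormedSpace ℂ X] [CompleteSpace X]
    (S T : X →L[ℂ] X) (hS : IsCompactOperator ⇑S) (hT : IsCompactOperator ⇑T) :
    spectrum ℂ S ⊆
      {0} ∪ spectrum ℂ T ∪
        {z : ℂ | z ∈ resolventSet ℂ T ∧ ‖z‖ ≤ ‖resolvent T z‖ * ‖(T - S).comp S‖} := by
  intro z hz
  by_cases hz0 : z = 0
  · exact Or.inl (Or.inl hz0)
  by_cases hzT : z ∈ spectrum ℂ T
  · exact Or.inl (Or.inr hzT)
  have hres : z ∈ resolventSet ℂ T := by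
    rwa [spectrum, Set.mem_compl_iff, not_not] at hzT
  refine Or.inr ⟨hres, ?_⟩
  by_contra hlt
  push_neg at hlt
  set R : X →L[ℂ] X := resolvent T z with hR
  have hRz : R * (z • (1 : X →L[ℂ] X) - T) = 1 := by
    have hu : IsUnit (algebraMap ℂ (X →L[ℂ] X) z - T) := hres
    have := Ring.inverse_mul_cancel _ hu
    rwa [Algebra.algebraMap_eq_smul_one] at this
  set C : X →L[ℂ] X := (T - S) * S with hC
  have hCc : (T - S).comp S = C := rfl
  have hznorm : (0 : ℝ) < ‖z‖ := norm_pos_iff.mpr hz0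
  have hCnorm : ‖z⁻¹ • (R * C)‖ < 1 := by
    have h1 : ‖z⁻¹ • (R * C)‖ ≤ ‖z‖⁻¹ * (‖R‖ * ‖C‖) := by
      rw [norm_smul z⁻¹ (R * C), norm_inv]
      exact mul_le_mul_of_nonneg_left (norm_mul_le _ _) (by positivity)
    have h2 : ‖z‖⁻¹ * (‖R‖ * ‖C‖) < ‖z‖⁻¹ * ‖z‖ := by
      apply mul_lt_mul_of_pos_left _ (by positivity)
      rwa [hCc] at hlt
    rw [inv_mul_cancel₀ hznorm.ne'] at h2
    linarith
  set Vu : (X →L[ℂ] X)ˣ := Units.oneSub (-(z⁻¹ • (R * C))) (by rwa [norm_neg])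
  have hV : (Vu : X →L[ℂ] X) = 1 + z⁻¹ • (R * C) := by
    rw [Units.val_oneSub, sub_neg_eq_add]
  set E : X →L[ℂ] X := z⁻¹ • (1 + R * S) with hE
  set A : X →L[ℂ] X := z • 1 - S with hA
  have hcomm : S * A = A * S := by
    simp only [hA, mul_sub, sub_mul, mul_one, one_mul, mul_smul_comm, smul_mul_assoc]
  have hRA : R * A = 1 + R * (T - S) := by
    have hsplit : A = (z • (1 : X →L[ℂ] X) - T) + (T - S) := by rw [hA]; abel
    rw [hsplit, mul_add, hRz]
  have hEA : E * A = (Vu : X →L[ℂ] X) := by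
    rw [hV, hE, smul_mul_assoc, add_mul, one_mul, mul_assoc, hcomm, ← mul_assoc, hRA,
      add_mul, one_mul, mul_assoc, ← hC]
    have : A + (S + R * C) = z • 1 + R * C := by
      rw [hA]; abel
    rw [this, smul_add, smul_smul, inv_mul_cancel₀ hz0, one_smul]
  have hUA : ((↑Vu⁻¹ : X →L[ℂ] X) * E) * A = 1 := by
    rw [mul_assoc, hEA, Units.inv_mul]
  have hsurj : Function.Surjective ⇑A := aux_surj S hS hz0 _ hUA
  have hinj : Function.Injective ⇑A := by
    have : ∀ w : X, ((↑Vu⁻¹ : X →L[ℂ] X) * E) (A w) = w := fun w => by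
      rw [← ContinuousLinearMap.mul_apply, hUA, ContinuousLinearMap.one_apply]
    exact Function.LeftInverse.injective this
  have hker : LinearMap.ker (A : X →ₗ[ℂ] X) = ⊥ := LinearMap.ker_eq_bot.mpr hinj
  have hrange : LinearMap.range (A : X →ₗ[ℂ] X) = ⊤ := LinearMap.range_eq_top.mpr hsurj
  set e := ContinuousLinearEquiv.ofBijective A hker hrange with he
  have hunit : IsUnit A := by
    refine ⟨⟨A, (e.symm : X →L[ℂ] X), ?_, ?_⟩, rfl⟩
    · ext x
      show A (e.symm x) = x
      have : A (e.symm x) = e (e.symm x) := rfl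
      rw [this, e.apply_symm_apply]
    · ext x
      show e.symm (A x) = x
      have : A x = e x := rfl
      rw [this, e.symm_apply_apply]
  have : z ∈ resolventSet ℂ S := by
    rw [spectrum.mem_resolventSet_iff, Algebra.algebraMap_eq_smul_one]
    exact hunit
  rw [spectrum, Set.mem_compl_iff] at hz
  exact hz this
end

section
/- Let E be a measurable space, μ a probability measure on E, and X_1, X_2, … independent E-valued random variables each with law μ. Let F be a countable family of measurable functions from E to [−1,1]. Let ε > 0, let n be a natural number with n ≥ 8/ε², and suppose there exist m measurable functions g_1, …, g_m : E → [−1,1] forming an (ε/8)-net for F in the uniform norm, i.e. every f ∈ F satisfies sup_{x∈E} |f(x) − g_j(x)| < ε/8 for some j. Then the probability that sup_{f∈F} |(1/n)∑_{i=1}^n f(X_i) − ∫_E f dμ| > ε is at most 8·m·exp(−n·ε²/128). -/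
open MeasureTheory

open ProbabilityTheory Real
open scoped ENNReal


lemma myexp_quad {u : ℝ} (hu : |u| ≤ 1) : Real.exp u ≤ 1 + u + u ^ 2 := by
  have h := Real.exp_bound hu (n := 2) (by norm_num)
  have h2 : (∑ m ∈ Finset.range 2, u ^ m / m.factorial) = 1 + u := by
    simp [Finset.sum_range_succ]
  rw [h2] at h
  have h3 : |u| ^ 2 * ((2:ℕ).succ / ((2:ℕ).factorial * 2)) = (3/4) * u ^ 2 := by
    rw [sq_abs]; norm_num [Nat.factorial]; ring
  rw [show ((2:ℕ):ℝ) = (2:ℝ) by norm_num] at h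
  rw [h3] at h
  have := abs_le.mp h
  nlinarith [sq_nonneg u, this.2]

lemma my_integrable_of_bdd {α : Type*} [MeasurableSpace α] (ν : Measure α)
    [IsFiniteMeasure ν] {f : α → ℝ} (hf : Measurable f) {C : ℝ} (h : ∀ x, |f x| ≤ C) :
    Integrable f ν :=
  (integrable_const C).mono' hf.aestronglyMeasurable (ae_of_all _ h)

lemma my_mgf_step {E : Type*} [MeasurableSpace E] (μ : Measure E) [IsProbabilityMeasure μ]
    {ψ : E → ℝ} (hm : Measurable ψ) (hb : ∀ x, |ψ x| ≤ 2)
    (h0 : ∫ x, ψ x ∂μ = 0) {t : ℝ} (ht : |t| ≤ 1/2) :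
    ∫ x, Real.exp (t * ψ x) ∂μ ≤ Real.exp (4 * t ^ 2) := by
  have hpt : ∀ x, Real.exp (t * ψ x) ≤ 1 + t * ψ x + t ^ 2 * ψ x ^ 2 := by
    intro x
    have h1 : |t * ψ x| ≤ 1 := by
      rw [abs_mul]
      calc |t| * |ψ x| ≤ (1/2) * 2 := by
            apply mul_le_mul ht (hb x) (abs_nonneg _) (by norm_num)
        _ = 1 := by norm_num
    have := myexp_quad h1
    calc Real.exp (t * ψ x) ≤ 1 + t * ψ x + (t * ψ x) ^ 2 := this
      _ = 1 + t * ψ x + t ^ 2 * ψ x ^ 2 := by ring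
  have hint1 : Integrable ψ μ := my_integrable_of_bdd μ hm hb
  have hint2 : Integrable (fun x => ψ x ^ 2) μ :=
    my_integrable_of_bdd μ (hm.pow_const 2) (C := 4) (fun x => by
      rw [abs_pow] ; nlinarith [hb x, abs_nonneg (ψ x)])
  have hintexp : Integrable (fun x => Real.exp (t * ψ x)) μ :=
    my_integrable_of_bdd μ ((hm.const_mul t).exp) (C := Real.exp 1) (fun x => by
      rw [abs_of_pos (Real.exp_pos _)]
      apply Real.exp_le_exp.mpr
      calc t * ψ x ≤ |t * ψ x| := le_abs_self _
        _ ≤ 1 := by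
          rw [abs_mul]
          calc |t| * |ψ x| ≤ (1/2) * 2 :=
                mul_le_mul ht (hb x) (abs_nonneg _) (by norm_num)
            _ = 1 := by norm_num)
  have hintRHS : Integrable (fun x => 1 + t * ψ x + t ^ 2 * ψ x ^ 2) μ :=
    ((integrable_const 1).add (hint1.const_mul t)).add (hint2.const_mul (t^2))
  calc ∫ x, Real.exp (t * ψ x) ∂μ
      ≤ ∫ x, (1 + t * ψ x + t ^ 2 * ψ x ^ 2) ∂μ :=
        integral_mono hintexp hintRHS hpt
    _ = 1 + t * ∫ x, ψ x ∂μ + t ^ 2 * ∫ x, ψ x ^ 2 ∂μ := by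
        have I1 : ∫ x, (1 + t * ψ x + t ^ 2 * ψ x ^ 2) ∂μ
            = (∫ x, (1 + t * ψ x) ∂μ) + ∫ x, t ^ 2 * ψ x ^ 2 ∂μ :=
          integral_add ((integrable_const 1).add (hint1.const_mul t)) (hint2.const_mul _)
        have I2 : ∫ x, (1 + t * ψ x) ∂μ = (∫ _x, (1:ℝ) ∂μ) + ∫ x, t * ψ x ∂μ :=
          integral_add (integrable_const 1) (hint1.const_mul t)
        rw [I1, I2, integral_const, integral_const_mul, integral_const_mul]
        simp
    _ ≤ 1 + 4 * t ^ 2 := by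
        rw [h0, mul_zero, add_zero]
        have : ∫ x, ψ x ^ 2 ∂μ ≤ 4 := by
          calc ∫ x, ψ x ^ 2 ∂μ ≤ ∫ _x, (4:ℝ) ∂μ := by
                apply integral_mono hint2 (integrable_const 4)
                intro x
                have h1 : |ψ x| ^ 2 ≤ 2 ^ 2 := by
                  apply pow_le_pow_left₀ (abs_nonneg _) (hb x)
                rw [sq_abs] at h1; norm_num at h1 ⊢; linarith
            _ = 4 := by simp
        nlinarith [sq_nonneg t]
    _ ≤ Real.exp (4 * t ^ 2) := by
        have := Real.add_one_le_exp (4 * t ^ 2)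
        linarith

lemma my_tail {E Ω : Type*} [MeasurableSpace E] [MeasurableSpace Ω]
    (μ : Measure E) [IsProbabilityMeasure μ]
    (P : Measure Ω) [IsProbabilityMeasure P]
    (X : ℕ → Ω → E) (hXmeas : ∀ i, Measurable (X i))
    (hindep : ProbabilityTheory.iIndepFun X P)
    (hlaw : ∀ i, Measure.map (X i) P = μ)
    {ψ : E → ℝ} (hm : Measurable ψ) (hb : ∀ x, |ψ x| ≤ 2)
    (h0 : ∫ x, ψ x ∂μ = 0) {ε : ℝ} (hε : 0 < ε) (hε2 : ε ≤ 2) (n : ℕ) :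
    P {ω | (n:ℝ) * ε / 2 ≤ ∑ k ∈ Finset.range n, ψ (X k ω)}
      ≤ ENNReal.ofReal (Real.exp (-((n:ℝ) * ε ^ 2) / 64)) := by
  set t : ℝ := ε / 16 with ht_def
  have ht0 : 0 ≤ t := by positivity
  have ht : |t| ≤ 1/2 := by rw [abs_of_nonneg ht0]; rw [ht_def]; linarith
  set Y : ℕ → Ω → ℝ := fun k => ψ ∘ X k with hY_def
  have hYmeas : ∀ k, Measurable (Y k) := fun k => hm.comp (hXmeas k)
  have hYindep : iIndepFun Y P := hindep.comp _ (fun _ => hm)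
  have hmgf : ∀ k, mgf (Y k) P t = ∫ x, Real.exp (t * ψ x) ∂μ := by
    intro k
    rw [mgf, ← hlaw k, integral_map (hXmeas k).aemeasurable
      ((hm.const_mul t).exp).aestronglyMeasurable]
    rfl
  have hmgf_le : ∀ k, mgf (Y k) P t ≤ Real.exp (4 * t ^ 2) := fun k => by
    rw [hmgf k]; exact my_mgf_step μ hm hb h0 ht
  set S : Ω → ℝ := ∑ k ∈ Finset.range n, Y k with hS_def
  have hSapp : ∀ ω, S ω = ∑ k ∈ Finset.range n, ψ (X k ω) := fun ω => by
    simp [hS_def, hY_def, Finset.sum_apply]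
  have hSmeas : Measurable S := by
    have : Measurable fun ω => ∑ k ∈ Finset.range n, ψ (X k ω) :=
      Finset.measurable_sum _ (fun k _ => hm.comp (hXmeas k))
    have heq : S = fun ω => ∑ k ∈ Finset.range n, ψ (X k ω) := funext hSapp
    rw [heq]; exact this
  have hSbd : ∀ ω, |S ω| ≤ 2 * n := by
    intro ω
    rw [hSapp ω]
    calc |∑ k ∈ Finset.range n, ψ (X k ω)| ≤ ∑ k ∈ Finset.range n, |ψ (X k ω)| :=
          Finset.abs_sum_le_sum_abs _ _
      _ ≤ ∑ _k ∈ Finset.range n, (2:ℝ) := Finset.sum_le_sum (fun k _ => hb _)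
      _ = 2 * n := by simp [mul_comm]
  have h_int : Integrable (fun ω => Real.exp (t * S ω)) P := by
    apply my_integrable_of_bdd P ((hSmeas.const_mul t).exp) (C := Real.exp (t * (2 * n)))
    intro ω
    rw [abs_of_pos (Real.exp_pos _)]
    apply Real.exp_le_exp.mpr
    calc t * S ω ≤ |t * S ω| := le_abs_self _
      _ = |t| * |S ω| := abs_mul _ _
      _ ≤ t * (2 * n) := by
          rw [abs_of_nonneg ht0]
          exact mul_le_mul_of_nonneg_left (hSbd ω) ht0
  have hcher := measure_ge_le_exp_mul_mgf (μ := P) (X := S) ((n:ℝ) * ε / 2) ht0 h_int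
  have hmgfS : mgf S P t = ∏ k ∈ Finset.range n, mgf (Y k) P t :=
    hYindep.mgf_sum hYmeas _
  have hprod : ∏ k ∈ Finset.range n, mgf (Y k) P t ≤ Real.exp (4 * t ^ 2) ^ n := by
    calc ∏ k ∈ Finset.range n, mgf (Y k) P t
        ≤ ∏ _k ∈ Finset.range n, Real.exp (4 * t ^ 2) :=
          Finset.prod_le_prod (fun k _ => mgf_nonneg) (fun k _ => hmgf_le k)
      _ = Real.exp (4 * t ^ 2) ^ n := by simp
  have hfinal : Real.exp (-t * ((n:ℝ) * ε / 2)) * Real.exp (4 * t ^ 2) ^ n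
      = Real.exp (-((n:ℝ) * ε ^ 2) / 64) := by
    rw [← Real.exp_nat_mul, ← Real.exp_add]
    congr 1
    rw [ht_def]
    ring
  have htoReal : (P {ω | (n:ℝ) * ε / 2 ≤ S ω}).toReal
      ≤ Real.exp (-((n:ℝ) * ε ^ 2) / 64) := by
    calc (P {ω | (n:ℝ) * ε / 2 ≤ S ω}).toReal
        ≤ Real.exp (-t * ((n:ℝ) * ε / 2)) * mgf S P t := hcher
      _ ≤ Real.exp (-t * ((n:ℝ) * ε / 2)) * Real.exp (4 * t ^ 2) ^ n := by
          rw [hmgfS]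
          exact mul_le_mul_of_nonneg_left hprod (Real.exp_pos _).le
      _ = _ := hfinal
  have hset : {ω | (n:ℝ) * ε / 2 ≤ ∑ k ∈ Finset.range n, ψ (X k ω)}
      = {ω | (n:ℝ) * ε / 2 ≤ S ω} := by
    ext ω; simp [hSapp ω]
  rw [hset, ← ENNReal.ofReal_toReal (measure_ne_top P _)]
  exact ENNReal.ofReal_le_ofReal htoReal

/-- (Empirical process bound via a uniform-norm net.)
If `X_1, X_2, …` are i.i.d. with law `μ`, `F` is a countable family of measurable
functions to `[−1,1]`, `ε > 0`, `n ≥ 8/ε²`, and `g_1,…,g_m` is an `(ε/8)`-net for `F`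
in the uniform norm, then
`P(sup_{f∈F} |(1/n)∑_{i=1}^n f(X_i) − ∫ f dμ| > ε) ≤ 8·m·exp(−n·ε²/128)`. -/
theorem stmt3 {E Ω : Type*} [MeasurableSpace E] [MeasurableSpace Ω]
    (μ : Measure E) [IsProbabilityMeasure μ]
    (P : Measure Ω) [IsProbabilityMeasure P]
    (X : ℕ → Ω → E) (hXmeas : ∀ i, Measurable (X i))
    (hindep : ProbabilityTheory.iIndepFun X P)
    (hlaw : ∀ i, Measure.map (X i) P = μ)
    {ι : Type*} [Countable ι] (F : ι → E → ℝ)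
    (hFmeas : ∀ i, Measurable (F i))
    (hFbdd : ∀ i x, F i x ∈ Set.Icc (-1 : ℝ) 1)
    (ε : ℝ) (hε : 0 < ε) (n : ℕ) (hn : 8 / ε ^ 2 ≤ (n : ℝ))
    (m : ℕ) (g : Fin m → E → ℝ)
    (hgmeas : ∀ j, Measurable (g j))
    (hgbdd : ∀ j x, g j x ∈ Set.Icc (-1 : ℝ) 1)
    (hnet : ∀ i : ι, ∃ j : Fin m, ∀ x : E, |F i x - g j x| < ε / 8) :
    P {ω : Ω | ε <
        ⨆ i : ι, |(1 / (n : ℝ)) * ∑ k ∈ Finset.range n, F i (X k ω) - ∫ x, F i x ∂μ|}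
      ≤ ENNReal.ofReal (8 * m * Real.exp (-((n : ℝ) * ε ^ 2) / 128)) := by
  have hFb : ∀ i x, |F i x| ≤ 1 := fun i x => abs_le.mpr ⟨(hFbdd i x).1, (hFbdd i x).2⟩
  have hgb : ∀ j x, |g j x| ≤ 1 := fun j x => abs_le.mpr ⟨(hgbdd j x).1, (hgbdd j x).2⟩
  have hnpos : (0:ℝ) < n := lt_of_lt_of_le (by positivity) hn
  have hn0 : n ≠ 0 := by exact_mod_cast hnpos.ne'
  have hFint : ∀ i, Integrable (F i) μ := fun i => my_integrable_of_bdd μ (hFmeas i) (hFb i)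
  have hgint : ∀ j, Integrable (g j) μ := fun j => my_integrable_of_bdd μ (hgmeas j) (hgb j)
  have hintb : ∀ {f : E → ℝ}, Integrable f μ → (∀ x, |f x| ≤ 1) → |∫ x, f x ∂μ| ≤ 1 := by
    intro f hf hb
    calc |∫ x, f x ∂μ| ≤ ∫ x, |f x| ∂μ := by
          simpa [Real.norm_eq_abs] using norm_integral_le_integral_norm (μ := μ) f
      _ ≤ ∫ _x, (1:ℝ) ∂μ := integral_mono hf.abs (integrable_const 1) hb
      _ = 1 := by simp
  -- bound each term of the sup by 2
  have hterm2 : ∀ i ω, |(1 / (n : ℝ)) * ∑ k ∈ Finset.range n, F i (X k ω) - ∫ x, F i x ∂μ| ≤ 2 := by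
    intro i ω
    have h1 : |∑ k ∈ Finset.range n, F i (X k ω)| ≤ n := by
      calc |∑ k ∈ Finset.range n, F i (X k ω)| ≤ ∑ k ∈ Finset.range n, |F i (X k ω)| :=
            Finset.abs_sum_le_sum_abs _ _
        _ ≤ ∑ _k ∈ Finset.range n, (1:ℝ) := Finset.sum_le_sum (fun k _ => hFb i _)
        _ = n := by simp
    have h2 : |(1 / (n : ℝ)) * ∑ k ∈ Finset.range n, F i (X k ω)| ≤ 1 := by
      rw [abs_mul, abs_of_pos (by positivity : (0:ℝ) < 1/(n:ℝ))]
      calc (1/(n:ℝ)) * |∑ k ∈ Finset.range n, F i (X k ω)| ≤ (1/(n:ℝ)) * n := by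
            exact mul_le_mul_of_nonneg_left h1 (by positivity)
        _ = 1 := by field_simp
    have h3 := hintb (hFint i) (hFb i)
    calc |(1 / (n : ℝ)) * ∑ k ∈ Finset.range n, F i (X k ω) - ∫ x, F i x ∂μ|
        ≤ |(1 / (n : ℝ)) * ∑ k ∈ Finset.range n, F i (X k ω)| + |∫ x, F i x ∂μ| := abs_sub _ _
      _ ≤ 2 := by linarith
  by_cases hε2 : ε ≤ 2
  · -- main case
    set c : Fin m → ℝ := fun j => ∫ x, g j x ∂μ with hc_def
    set φ : Fin m → E → ℝ := fun j x => g j x - c j with hφ_def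
    have hφmeas : ∀ j, Measurable (φ j) := fun j => (hgmeas j).sub measurable_const
    have hcb : ∀ j, |c j| ≤ 1 := fun j => hintb (hgint j) (hgb j)
    have hφb : ∀ j x, |φ j x| ≤ 2 := by
      intro j x
      calc |g j x - c j| ≤ |g j x| + |c j| := abs_sub _ _
        _ ≤ 2 := by linarith [hgb j x, hcb j]
    have hφ0 : ∀ j, ∫ x, φ j x ∂μ = 0 := by
      intro j
      rw [hφ_def]
      simp only
      rw [integral_sub (hgint j) (integrable_const _), integral_const]
      simp [hc_def]
    set Bp : Fin m → Set Ω := fun j => {ω | (n:ℝ) * ε / 2 ≤ ∑ k ∈ Finset.range n, φ j (X k ω)}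
    set Bm : Fin m → Set Ω := fun j => {ω | (n:ℝ) * ε / 2 ≤ ∑ k ∈ Finset.range n, -φ j (X k ω)}
    have hsub : {ω : Ω | ε <
        ⨆ i : ι, |(1 / (n : ℝ)) * ∑ k ∈ Finset.range n, F i (X k ω) - ∫ x, F i x ∂μ|}
        ⊆ ⋃ j, Bp j ∪ Bm j := by
      intro ω hω
      simp only [Set.mem_setOf_eq] at hω
      rcases isEmpty_or_nonempty ι with hni | hne
      · exfalso
        have hle : (⨆ i : ι, |(1 / (n : ℝ)) * ∑ k ∈ Finset.range n, F i (X k ω)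
            - ∫ x, F i x ∂μ|) ≤ 0 := Real.iSup_le (fun i => (hni.elim i)) le_rfl
        linarith
      obtain ⟨i, hi⟩ := exists_lt_of_lt_ciSup hω
      obtain ⟨j, hj⟩ := hnet i
      set sF := ∑ k ∈ Finset.range n, F i (X k ω) with hsF
      set sG := ∑ k ∈ Finset.range n, g j (X k ω) with hsG
      have h1 : |sF - sG| ≤ (n:ℝ) * (ε/8) := by
        rw [hsF, hsG, ← Finset.sum_sub_distrib]
        calc |∑ k ∈ Finset.range n, (F i (X k ω) - g j (X k ω))|
            ≤ ∑ k ∈ Finset.range n, |F i (X k ω) - g j (X k ω)| := Finset.abs_sum_le_sum_abs _ _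
          _ ≤ ∑ _k ∈ Finset.range n, (ε/8) := Finset.sum_le_sum (fun k _ => (hj _).le)
          _ = (n:ℝ) * (ε/8) := by simp [mul_comm]
      have h2 : |(∫ x, F i x ∂μ) - c j| ≤ ε/8 := by
        rw [hc_def]
        simp only
        rw [← integral_sub (hFint i) (hgint j)]
        calc |∫ x, (F i x - g j x) ∂μ| ≤ ∫ x, |F i x - g j x| ∂μ := by
              simpa [Real.norm_eq_abs] using
                norm_integral_le_integral_norm (μ := μ) (fun x => F i x - g j x)
          _ ≤ ∫ _x, (ε/8) ∂μ :=
              integral_mono ((hFint i).sub (hgint j)).abs (integrable_const _)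
                (fun x => (hj x).le)
          _ = ε/8 := by simp
      have h1' : |(1/(n:ℝ)) * sF - (1/(n:ℝ)) * sG| ≤ ε/8 := by
        rw [← mul_sub, abs_mul, abs_of_pos (by positivity : (0:ℝ) < 1/(n:ℝ))]
        calc (1/(n:ℝ)) * |sF - sG| ≤ (1/(n:ℝ)) * ((n:ℝ) * (ε/8)) :=
              mul_le_mul_of_nonneg_left h1 (by positivity)
          _ = ε/8 := by field_simp
      have hkey : ε/2 ≤ |(1/(n:ℝ)) * sG - c j| := by
        have htri : |(1/(n:ℝ)) * sF - ∫ x, F i x ∂μ|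
            ≤ |(1/(n:ℝ)) * sG - c j| + |(1/(n:ℝ)) * sF - (1/(n:ℝ)) * sG|
              + |(∫ x, F i x ∂μ) - c j| := by
          have : (1/(n:ℝ)) * sF - ∫ x, F i x ∂μ
              = ((1/(n:ℝ)) * sG - c j) + ((1/(n:ℝ)) * sF - (1/(n:ℝ)) * sG)
                - ((∫ x, F i x ∂μ) - c j) := by ring
          rw [this]
          calc _ ≤ |((1/(n:ℝ)) * sG - c j) + ((1/(n:ℝ)) * sF - (1/(n:ℝ)) * sG)|
                + |(∫ x, F i x ∂μ) - c j| := abs_sub _ _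
            _ ≤ _ := by gcongr; exact abs_add_le _ _
        linarith
      have hsum : ∑ k ∈ Finset.range n, φ j (X k ω) = sG - (n:ℝ) * c j := by
        rw [hφ_def]
        simp only
        rw [Finset.sum_sub_distrib, Finset.sum_const, Finset.card_range, hsG, nsmul_eq_mul]
      have hkey2 : (n:ℝ) * ε / 2 ≤ |∑ k ∈ Finset.range n, φ j (X k ω)| := by
        rw [hsum]
        have : sG - (n:ℝ) * c j = (n:ℝ) * ((1/(n:ℝ)) * sG - c j) := by field_simp
        rw [this, abs_mul, abs_of_pos hnpos]
        calc (n:ℝ) * ε / 2 = (n:ℝ) * (ε/2) := by ring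
          _ ≤ (n:ℝ) * |(1/(n:ℝ)) * sG - c j| := mul_le_mul_of_nonneg_left hkey hnpos.le
      rcases le_abs.mp hkey2 with h | h
      · exact Set.mem_iUnion.mpr ⟨j, Or.inl h⟩
      · refine Set.mem_iUnion.mpr ⟨j, Or.inr ?_⟩
        show (n:ℝ) * ε / 2 ≤ ∑ k ∈ Finset.range n, -φ j (X k ω)
        rw [← Finset.sum_neg_distrib] at h
        exact h
    set e : ℝ≥0∞ := ENNReal.ofReal (Real.exp (-((n:ℝ) * ε ^ 2) / 64)) with he_def
    have hBp : ∀ j, P (Bp j) ≤ e := fun j =>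
      my_tail μ P X hXmeas hindep hlaw (hφmeas j) (hφb j) (hφ0 j) hε hε2 n
    have hBm : ∀ j, P (Bm j) ≤ e := fun j =>
      my_tail μ P X hXmeas hindep hlaw (hφmeas j).neg
        (fun x => by rw [Pi.neg_apply, abs_neg]; exact hφb j x)
        (by simp only [Pi.neg_apply]; rw [integral_neg, hφ0 j, neg_zero]) hε hε2 n
    calc P _ ≤ P (⋃ j, Bp j ∪ Bm j) := measure_mono hsub
      _ ≤ ∑' j : Fin m, P (Bp j ∪ Bm j) := measure_iUnion_le _
      _ = ∑ j : Fin m, P (Bp j ∪ Bm j) := tsum_fintype _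
      _ ≤ ∑ j : Fin m, (P (Bp j) + P (Bm j)) :=
          Finset.sum_le_sum (fun j _ => measure_union_le _ _)
      _ ≤ ∑ _j : Fin m, (e + e) := Finset.sum_le_sum (fun j _ => add_le_add (hBp j) (hBm j))
      _ = (m : ℝ≥0∞) * (e + e) := by
          rw [Finset.sum_const, Finset.card_univ, Fintype.card_fin, nsmul_eq_mul]
      _ ≤ ENNReal.ofReal (8 * m * Real.exp (-((n : ℝ) * ε ^ 2) / 128)) := by
          rw [he_def, ← ENNReal.ofReal_add (Real.exp_pos _).le (Real.exp_pos _).le,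
            ← ENNReal.ofReal_natCast m,
            ← ENNReal.ofReal_mul (by positivity : (0:ℝ) ≤ (m:ℝ))]
          apply ENNReal.ofReal_le_ofReal
          have hexp : Real.exp (-((n:ℝ) * ε ^ 2) / 64) ≤ Real.exp (-((n:ℝ) * ε ^ 2) / 128) := by
            apply Real.exp_le_exp.mpr
            have : (0:ℝ) ≤ (n:ℝ) * ε ^ 2 := by positivity
            linarith
          have hm0 : (0:ℝ) ≤ (m:ℝ) := by positivity
          nlinarith [Real.exp_pos (-((n:ℝ) * ε ^ 2) / 128), Real.exp_pos (-((n:ℝ) * ε ^ 2) / 64)]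
  · -- ε > 2 : event is empty
    push_neg at hε2
    have hempty : {ω : Ω | ε <
        ⨆ i : ι, |(1 / (n : ℝ)) * ∑ k ∈ Finset.range n, F i (X k ω) - ∫ x, F i x ∂μ|} = ∅ := by
      apply Set.eq_empty_iff_forall_notMem.mpr
      intro ω hω
      have hle : (⨆ i : ι, |(1 / (n : ℝ)) * ∑ k ∈ Finset.range n, F i (X k ω)
          - ∫ x, F i x ∂μ|) ≤ 2 :=
        Real.iSup_le (fun i => hterm2 i ω) (by norm_num)
      simp only [Set.mem_setOf_eq] at hω
      linarith
    rw [hempty]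
    simp
end

section
/- Let R : [0,∞) → ℝ be Lipschitz with constant L, bounded by B, and satisfy R(r) = 0 for all r > 1. Then there exists a constant C > 0 depending only on L and B (one may take C = max(5L/4, 2B)) such that for every t > 0 and all x, y, z ∈ ℝ^d: |R(‖x−y‖²/(4t)) − R(‖z−y‖²/(4t))| ≤ (C/√t)·‖x−z‖. -/
/-- If `R : [0,∞) → ℝ` is `L`-Lipschitz, bounded by `B` and supported in
`[0,1]`, then with `C = max(5L/4, 2B) > 0`, for every `t > 0` and all `x, y, z ∈ ℝ^d`,
`|R(‖x−y‖²/(4t)) − R(‖z−y‖²/(4t))| ≤ (C/√t)·‖x−z‖`. -/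
theorem stmt5 (d : ℕ) (L B : ℝ) (hL : 0 < L) (hB : 0 < B) (R : ℝ → ℝ)
    (hLip : ∀ a b : ℝ, 0 ≤ a → 0 ≤ b → |R a - R b| ≤ L * |a - b|)
    (hbdd : ∀ r : ℝ, 0 ≤ r → |R r| ≤ B)
    (hsupp : ∀ r : ℝ, 1 < r → R r = 0) :
    ∃ C : ℝ, 0 < C ∧ C = max (5 * L / 4) (2 * B) ∧
      ∀ t : ℝ, 0 < t → ∀ x y z : EuclideanSpace ℝ (Fin d),
        |R (‖x - y‖ ^ 2 / (4 * t)) - R (‖z - y‖ ^ 2 / (4 * t))| ≤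
          C / Real.sqrt t * ‖x - z‖ := by
  refine ⟨max (5 * L / 4) (2 * B), lt_max_iff.mpr (Or.inl (by positivity)), rfl, ?_⟩
  intro t ht x y z
  set C := max (5 * L / 4) (2 * B) with hC
  have hC1 : 5 * L / 4 ≤ C := le_max_left _ _
  have hC2 : 2 * B ≤ C := le_max_right _ _
  have hCpos : 0 < C := lt_max_iff.mpr (Or.inl (by positivity))
  set s := Real.sqrt t with hsdef
  have hs : 0 < s := Real.sqrt_pos.mpr ht
  have hs2 : s ^ 2 = t := Real.sq_sqrt ht.le
  set a := ‖x - y‖ with ha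
  set b := ‖z - y‖ with hb
  set u := ‖x - z‖ with hu
  have ha0 : 0 ≤ a := norm_nonneg _
  have hb0 : 0 ≤ b := norm_nonneg _
  have hu0 : 0 ≤ u := norm_nonneg _
  have hab : |a - b| ≤ u := by
    have h := abs_norm_sub_norm_le (x - y) (z - y)
    have he : (x - y) - (z - y) = x - z := by abel
    rwa [he] at h
  have hab' := abs_le.mp hab
  have ht4 : (0:ℝ) < 4 * t := by linarith
  have hp0 : 0 ≤ a ^ 2 / (4 * t) := by positivity
  have hq0 : 0 ≤ b ^ 2 / (4 * t) := by positivity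
  rcases le_or_gt u s with hus | hsu
  · -- small displacement: u ≤ s
    by_cases hboth : 1 < a ^ 2 / (4 * t) ∧ 1 < b ^ 2 / (4 * t)
    · rw [hsupp _ hboth.1, hsupp _ hboth.2]
      simp only [sub_zero, abs_zero]
      positivity
    · have hmin : a ≤ 2 * s ∨ b ≤ 2 * s := by
        rcases not_and_or.mp hboth with h | h
        · left
          have h1 : a ^ 2 / (4 * t) ≤ 1 := not_lt.mp h
          have h2 : a ^ 2 ≤ 4 * t := by
            rw [div_le_one ht4] at h1; linarith
          nlinarith
        · right
          have h1 : b ^ 2 / (4 * t) ≤ 1 := not_lt.mp h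
          have h2 : b ^ 2 ≤ 4 * t := by
            rw [div_le_one ht4] at h1; linarith
          nlinarith
      have hsum : a + b ≤ 5 * s := by
        rcases hmin with h | h
        · linarith
        · linarith
      have hlip := hLip _ _ hp0 hq0
      have key : |a ^ 2 / (4 * t) - b ^ 2 / (4 * t)| = |a - b| * (a + b) / (4 * t) := by
        rw [div_sub_div_same, abs_div, abs_of_pos ht4]
        congr 1
        rw [← abs_of_nonneg (add_nonneg ha0 hb0), ← abs_mul]
        ring_nf
      rw [key] at hlip
      have h1 : |a - b| * (a + b) ≤ u * (5 * s) :=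
        mul_le_mul hab hsum (add_nonneg ha0 hb0) hu0
      have h2 : L * (|a - b| * (a + b) / (4 * t)) ≤ L * (u * (5 * s) / (4 * t)) := by
        apply mul_le_mul_of_nonneg_left _ hL.le
        exact div_le_div_of_nonneg_right h1 ht4.le
      have h3 : L * (u * (5 * s) / (4 * t)) = 5 * L / 4 / s * u := by
        rw [← hs2]; field_simp
      have h4 : 5 * L / 4 / s * u ≤ C / s * u := by
        apply mul_le_mul_of_nonneg_right _ hu0
        exact div_le_div_of_nonneg_right hC1 hs.le
      linarith
  · -- large displacement: s < u
    have h2b : |R (a ^ 2 / (4 * t)) - R (b ^ 2 / (4 * t))| ≤ 2 * B := by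
      calc |R (a ^ 2 / (4 * t)) - R (b ^ 2 / (4 * t))|
          ≤ |R (a ^ 2 / (4 * t))| + |R (b ^ 2 / (4 * t))| := abs_sub _ _
        _ ≤ B + B := add_le_add (hbdd _ hp0) (hbdd _ hq0)
        _ = 2 * B := by ring
    have hone : 1 ≤ u / s := (one_le_div hs).mpr hsu.le
    have h5 : 2 * B * 1 ≤ C * (u / s) :=
      mul_le_mul hC2 hone zero_le_one hCpos.le
    have h6 : C / s * u = C * (u / s) := by field_simp
    rw [h6]
    linarith
end

section
/- Let R : [0,∞) → ℝ be Lipschitz with constant L, bounded by B, with R(r) = 0 for r > 1, and let C = max(5L/4, 2B). Let M ⊆ ℝ^d, let k ≥ 1 and C₀ > 0, and suppose that for every δ > 0 the set M can be covered by at most (C₀/δ)^k balls of radius δ. Then for every t > 0 and every ε > 0, the family of functions F = { y ↦ R(‖x−y‖²/(4t)) : x ∈ M } admits an ε-net in the uniform norm of cardinality at most (C₀·C/(ε·√t))^k. -/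
set_option maxHeartbeats 1000000 in
/-- (Covering number of the kernel family.)  Let `R : [0,∞) → ℝ` be
`L`-Lipschitz, bounded by `B`, supported in `[0,1]`, and `C = max(5L/4, 2B)`.  If
`M ⊆ ℝ^d` can be covered by at most `(C₀/δ)^k` balls of radius `δ` for every `δ > 0`,
then for every `t > 0` and `ε > 0` the family `{ y ↦ R(‖x−y‖²/(4t)) : x ∈ M }` admits an
`ε`-net in the uniform norm of cardinality at most `(C₀·C/(ε·√t))^k`. -/
theorem stmt6 (d k : ℕ) (hk : 1 ≤ k) (L B C₀ : ℝ) (hL : 0 < L) (hB : 0 < B)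
    (hC₀ : 0 < C₀) (R : ℝ → ℝ)
    (hLip : ∀ a b : ℝ, 0 ≤ a → 0 ≤ b → |R a - R b| ≤ L * |a - b|)
    (hbdd : ∀ r : ℝ, 0 ≤ r → |R r| ≤ B)
    (hsupp : ∀ r : ℝ, 1 < r → R r = 0)
    (M : Set (EuclideanSpace ℝ (Fin d)))
    (hcover : ∀ δ : ℝ, 0 < δ → ∃ s : Finset (EuclideanSpace ℝ (Fin d)),
      (s.card : ℝ) ≤ (C₀ / δ) ^ k ∧ M ⊆ ⋃ c ∈ s, Metric.ball c δ) :
    ∀ t ε : ℝ, 0 < t → 0 < ε →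
      ∃ (m : ℕ) (g : Fin m → EuclideanSpace ℝ (Fin d) → ℝ),
        (m : ℝ) ≤ (C₀ * max (5 * L / 4) (2 * B) / (ε * Real.sqrt t)) ^ k ∧
        ∀ x ∈ M, ∃ j : Fin m, ∀ y : EuclideanSpace ℝ (Fin d),
          |R (‖x - y‖ ^ 2 / (4 * t)) - g j y| ≤ ε := by
  intro t ε ht hε
  set C : ℝ := max (5 * L / 4) (2 * B) with hCdef
  have hC : 0 < C := lt_max_of_lt_right (by linarith)
  have hst : 0 < Real.sqrt t := Real.sqrt_pos.mpr ht
  have hts : Real.sqrt t * Real.sqrt t = t := Real.mul_self_sqrt ht.le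
  set δ : ℝ := ε * Real.sqrt t / C with hδdef
  have hδ : 0 < δ := by positivity
  obtain ⟨s, hcard, hsub⟩ := hcover δ hδ
  refine ⟨s.card,
    fun j y => R (‖(s.equivFin.symm j : EuclideanSpace ℝ (Fin d)) - y‖ ^ 2 / (4 * t)),
    ?_, ?_⟩
  · have hEq : C₀ / δ = C₀ * C / (ε * Real.sqrt t) := by
      rw [hδdef]
      field_simp
    rw [← hEq]
    exact hcard
  · intro x hx
    obtain ⟨c, hcs, hxc⟩ := Set.mem_iUnion₂.mp (hsub hx)
    refine ⟨s.equivFin ⟨c, hcs⟩, fun y => ?_⟩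
    have he : (s.equivFin.symm (s.equivFin ⟨c, hcs⟩) : EuclideanSpace ℝ (Fin d)) = c := by
      simp
    beta_reduce
    rw [he]
    have hdist : ‖x - c‖ < δ := by
      rw [← dist_eq_norm]; exact hxc
    set u := ‖x - y‖ with hu'
    set v := ‖c - y‖ with hv'
    have hu : 0 ≤ u := norm_nonneg _
    have hv : 0 ≤ v := norm_nonneg _
    have huv : |u - v| ≤ ‖x - c‖ := by
      have h := abs_norm_sub_norm_le (x - y) (c - y)
      have h2 : (x - y) - (c - y) = x - c := by abel
      rwa [h2] at h
    have ha : 0 ≤ u ^ 2 / (4 * t) := by positivity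
    have hb : 0 ≤ v ^ 2 / (4 * t) := by positivity
    rcases le_or_gt ε (2 * B) with hεB | hεB
    · -- small ε case
      have hεC : ε ≤ C := le_trans hεB (le_max_right _ _)
      have hδt : δ ≤ Real.sqrt t := by
        rw [hδdef, div_le_iff₀ hC]
        nlinarith
      by_cases hab : 1 < u ^ 2 / (4 * t) ∧ 1 < v ^ 2 / (4 * t)
      · rw [hsupp _ hab.1, hsupp _ hab.2]
        simpa using hε.le
      · push_neg at hab
        have hmin : u ≤ 2 * Real.sqrt t ∨ v ≤ 2 * Real.sqrt t := by
          rcases le_or_gt (u ^ 2 / (4 * t)) 1 with h | h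
          · left
            have hu2 : u ^ 2 ≤ 4 * t := by
              rw [div_le_one (by linarith)] at h
              linarith
            nlinarith
          · right
            have h2 := hab h
            have hv2 : v ^ 2 ≤ 4 * t := by
              rw [div_le_one (by linarith)] at h2
              linarith
            nlinarith
        have hd : |u - v| ≤ δ := le_of_lt (lt_of_le_of_lt huv hdist)
        have hsum : u + v ≤ 5 * Real.sqrt t := by
          have h1 : u - v ≤ δ := le_trans (le_abs_self _) hd
          have h2 : v - u ≤ δ := by
            have h3 := le_abs_self (v - u)
            rw [abs_sub_comm] at h3
            linarith
          rcases hmin with h | h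
          · linarith
          · linarith
        have habs : |u ^ 2 - v ^ 2| ≤ 5 * Real.sqrt t * δ := by
          have heq : |u ^ 2 - v ^ 2| = |u - v| * (u + v) := by
            rw [← abs_of_nonneg (by linarith : (0:ℝ) ≤ u + v), ← abs_mul]
            ring_nf
          rw [heq]
          calc |u - v| * (u + v) ≤ δ * (5 * Real.sqrt t) :=
                mul_le_mul hd hsum (by linarith) hδ.le
            _ = 5 * Real.sqrt t * δ := by ring
        have hLC : 5 * L ≤ 4 * C := by
          have := le_max_left (5 * L / 4) (2 * B)
          rw [← hCdef] at this
          linarith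
        calc |R (u ^ 2 / (4 * t)) - R (v ^ 2 / (4 * t))|
            ≤ L * |u ^ 2 / (4 * t) - v ^ 2 / (4 * t)| := hLip _ _ ha hb
          _ = L * (|u ^ 2 - v ^ 2| / (4 * t)) := by
              rw [div_sub_div_same, abs_div, abs_of_pos (by linarith : (0:ℝ) < 4 * t)]
          _ = L * |u ^ 2 - v ^ 2| / (4 * t) := by ring
          _ ≤ ε := by
              rw [div_le_iff₀ (by linarith : (0:ℝ) < 4 * t)]
              have hδC : δ * C = ε * Real.sqrt t := by
                rw [hδdef]; field_simp
              have e1 : L * (5 * Real.sqrt t * δ) * C = 5 * L * ε * t := by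
                linear_combination (5 * L * Real.sqrt t) * hδC + (5 * L * ε) * hts
              calc L * |u ^ 2 - v ^ 2| ≤ L * (5 * Real.sqrt t * δ) :=
                    mul_le_mul_of_nonneg_left habs hL.le
                _ ≤ ε * (4 * t) := by
                    have key : L * (5 * Real.sqrt t * δ) * C ≤ ε * (4 * t) * C := by
                      rw [e1]
                      nlinarith [mul_le_mul_of_nonneg_right hLC (mul_pos hε ht).le]
                    exact le_of_mul_le_mul_right key hC
    · -- large ε case: use boundedness
      have h1 := hbdd _ ha
      have h2 := hbdd _ hb
      calc |R (u ^ 2 / (4 * t)) - R (v ^ 2 / (4 * t))|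
          ≤ |R (u ^ 2 / (4 * t))| + |R (v ^ 2 / (4 * t))| := abs_sub (R (u ^ 2 / (4 * t))) (R (v ^ 2 / (4 * t)))
        _ ≤ ε := by linarith
end

section
/- Let E be a measurable space, μ a probability measure on E, and X_1, X_2, … independent E-valued random variables each with law μ. Let F be a countable family of measurable functions from E to [−1,1], let k ≥ 1, C₀ ≥ 1 and t ∈ (0,1], and suppose that for every ε > 0 the family F admits an ε-net in the uniform norm of cardinality at most (C₀/(ε·√t))^k. Then there exists a constant C > 0 depending only on C₀ and k such that for every n ≥ 2, with probability at least 1 − 1/(2n): sup_{f∈F} |(1/n)∑_{i=1}^n f(X_i) − ∫_E f dμ| ≤ C·n^{−1/2}·(ln n − ln t + 1)^{1/2}. -/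
open MeasureTheory ProbabilityTheory Real

lemma exp_le_aux (s y : ℝ) (hy : |y| ≤ 2) :
    Real.exp (s * y) ≤ Real.cosh (2*s) + y/2 * Real.sinh (2*s) := by
  rw [abs_le] at hy
  have h := convexOn_exp.2 (Set.mem_univ (2*s)) (Set.mem_univ (-(2*s)))
      (show (0:ℝ) ≤ (2+y)/4 by linarith [hy.1])
      (show (0:ℝ) ≤ (2-y)/4 by linarith [hy.2])
      (show (2+y)/4 + (2-y)/4 = 1 by ring)
  simp only [smul_eq_mul] at h
  calc Real.exp (s * y) = Real.exp ((2+y)/4 * (2*s) + (2-y)/4 * (-(2*s))) := by ring_nf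
    _ ≤ (2+y)/4 * Real.exp (2*s) + (2-y)/4 * Real.exp (-(2*s)) := h
    _ = Real.cosh (2*s) + y/2 * Real.sinh (2*s) := by
        rw [Real.cosh_eq, Real.sinh_eq]; ring

lemma integrable_of_bound {Ω : Type*} [MeasurableSpace Ω] (P : Measure Ω) [IsProbabilityMeasure P]
    (f : Ω → ℝ) (hf : Measurable f) (c : ℝ) (h : ∀ ω, |f ω| ≤ c) : Integrable f P :=
  Integrable.mono' (integrable_const c) hf.aestronglyMeasurable
    (ae_of_all _ fun ω => by simpa [Real.norm_eq_abs] using h ω)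

lemma mgf_aux {Ω : Type*} [MeasurableSpace Ω] (P : Measure Ω) [IsProbabilityMeasure P]
    (Y : Ω → ℝ) (hm : Measurable Y) (hb : ∀ ω, |Y ω| ≤ 2) (h0 : ∫ ω, Y ω ∂P = 0) (s : ℝ) :
    mgf Y P s ≤ Real.exp (2 * s^2) := by
  have hYint : Integrable Y P := integrable_of_bound P Y hm 2 hb
  have hint : Integrable (fun ω => Real.exp (s * Y ω)) P := by
    refine integrable_of_bound P _ ((hm.const_mul s).exp) (Real.exp (|s| * 2)) fun ω => ?_
    rw [Real.abs_exp]
    refine Real.exp_le_exp.2 ((le_abs_self _).trans ?_)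
    rw [abs_mul]
    exact mul_le_mul_of_nonneg_left (hb ω) (abs_nonneg s)
  have hrint : Integrable (fun ω => Real.cosh (2*s) + Y ω / 2 * Real.sinh (2*s)) P :=
    (integrable_const _).add ((hYint.div_const 2).mul_const _)
  calc mgf Y P s = ∫ ω, Real.exp (s * Y ω) ∂P := rfl
    _ ≤ ∫ ω, (Real.cosh (2*s) + Y ω / 2 * Real.sinh (2*s)) ∂P :=
        integral_mono hint hrint (fun ω => exp_le_aux s (Y ω) (hb ω))
    _ = Real.cosh (2*s) + (∫ ω, Y ω ∂P) / 2 * Real.sinh (2*s) := by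
        rw [integral_add (integrable_const _) ((hYint.div_const 2).mul_const _),
          integral_const, integral_mul_const, integral_div]
        simp
    _ = Real.cosh (2*s) := by rw [h0]; ring
    _ ≤ Real.exp ((2*s)^2/2) := Real.cosh_le_exp_half_sq _
    _ = Real.exp (2 * s^2) := by ring_nf

lemma hoeffding_aux {Ω : Type*} [MeasurableSpace Ω] (P : Measure Ω) [IsProbabilityMeasure P]
    (Y : ℕ → Ω → ℝ) (hmeas : ∀ i, Measurable (Y i))
    (hindep : iIndepFun Y P)
    (hbdd : ∀ i ω, |Y i ω| ≤ 2) (hmean : ∀ i, ∫ ω, Y i ω ∂P = 0)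
    (n : ℕ) (hn : 1 ≤ n) (a : ℝ) (ha : 0 < a) :
    (P {ω | a ≤ |∑ i ∈ Finset.range n, Y i ω|}).toReal ≤ 2 * Real.exp (-(a^2) / (8*n)) := by
  have hN0 : (0:ℝ) < n := by exact_mod_cast Nat.lt_of_lt_of_le Nat.zero_lt_one hn
  set s : ℝ := a / (4*n) with hs_def
  have hs : 0 < s := by positivity
  have hint : ∀ (c : ℝ) (i : ℕ), Integrable (fun ω => Real.exp (c * Y i ω)) P := by
    intro c i
    refine integrable_of_bound P _ (((hmeas i).const_mul c).exp) (Real.exp (|c| * 2)) fun ω => ?_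
    rw [Real.abs_exp]
    refine Real.exp_le_exp.2 ((le_abs_self _).trans ?_)
    rw [abs_mul]; exact mul_le_mul_of_nonneg_left (hbdd i ω) (abs_nonneg c)
  have hmgf : ∀ c : ℝ, mgf (∑ i ∈ Finset.range n, Y i) P c ≤ Real.exp (2*c^2) ^ n := by
    intro c
    rw [hindep.mgf_sum hmeas]
    calc ∏ i ∈ Finset.range n, mgf (Y i) P c
        ≤ ∏ _i ∈ Finset.range n, Real.exp (2*c^2) :=
          Finset.prod_le_prod (fun i _ => mgf_nonneg)
            (fun i _ => mgf_aux P _ (hmeas i) (hbdd i) (hmean i) c)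
      _ = Real.exp (2*c^2) ^ n := by rw [Finset.prod_const, Finset.card_range]
  have key : Real.exp (-(s * a)) * Real.exp (2*s^2) ^ n = Real.exp (-(a^2) / (8*n)) := by
    rw [← Real.exp_nat_mul, ← Real.exp_add]
    congr 1
    have hne : (n:ℝ) ≠ 0 := hN0.ne'
    rw [hs_def]; field_simp
    ring
  have h1 : (P {ω | a ≤ (∑ i ∈ Finset.range n, Y i) ω}).toReal ≤ Real.exp (-(a^2)/(8*n)) := by
    refine (measure_ge_le_exp_mul_mgf a hs.le
      (hindep.integrable_exp_mul_sum hmeas (fun i _ => hint s i))).trans ?_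
    rw [← key, neg_mul]
    exact mul_le_mul_of_nonneg_left (hmgf s) (Real.exp_nonneg _)
  have h2 : (P {ω | (∑ i ∈ Finset.range n, Y i) ω ≤ -a}).toReal ≤ Real.exp (-(a^2)/(8*n)) := by
    refine (measure_le_le_exp_mul_mgf (-a) (t := -s) (by linarith)
      (hindep.integrable_exp_mul_sum hmeas (fun i _ => hint (-s) i))).trans ?_
    have e1 : -(-s) * -a = -(s * a) := by ring
    have e2 : Real.exp (2*(-s)^2) ^ n = Real.exp (2*s^2) ^ n := by ring_nf
    rw [e1, ← key]
    exact (mul_le_mul_of_nonneg_left ((hmgf (-s)).trans e2.le) (Real.exp_nonneg _))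
  have hsub : {ω | a ≤ |∑ i ∈ Finset.range n, Y i ω|} ⊆
      {ω | a ≤ (∑ i ∈ Finset.range n, Y i) ω} ∪ {ω | (∑ i ∈ Finset.range n, Y i) ω ≤ -a} := by
    intro ω hω
    simp only [Set.mem_setOf_eq] at hω
    simp only [Set.mem_union, Set.mem_setOf_eq, Finset.sum_apply]
    rcases le_abs.1 hω with h | h
    · exact Or.inl h
    · exact Or.inr (by linarith)
  calc (P {ω | a ≤ |∑ i ∈ Finset.range n, Y i ω|}).toReal
      ≤ (P ({ω | a ≤ (∑ i ∈ Finset.range n, Y i) ω} ∪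
            {ω | (∑ i ∈ Finset.range n, Y i) ω ≤ -a})).toReal :=
        ENNReal.toReal_mono (measure_ne_top _ _) (measure_mono hsub)
    _ ≤ (P {ω | a ≤ (∑ i ∈ Finset.range n, Y i) ω}).toReal +
        (P {ω | (∑ i ∈ Finset.range n, Y i) ω ≤ -a}).toReal := by
        rw [← ENNReal.toReal_add (measure_ne_top _ _) (measure_ne_top _ _)]
        exact ENNReal.toReal_mono (by finiteness) (measure_union_le _ _)
    _ ≤ 2 * Real.exp (-(a^2)/(8*n)) := by linarith


set_option maxHeartbeats 1000000 in
/-- If a countable family `F` of measurable `[−1,1]`-valued functions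
admits, for every `ε > 0`, an `ε`-net in the uniform norm of cardinality at most
`(C₀/(ε·√t))^k` (with `k ≥ 1`, `C₀ ≥ 1`, `t ∈ (0,1]`), then there is a constant `C > 0`
depending only on `C₀` and `k` such that for every `n ≥ 2`, with probability at least
`1 − 1/(2n)`, `sup_{f∈F} |(1/n)∑_{i=1}^n f(X_i) − ∫ f dμ| ≤ C·n^{−1/2}·(ln n − ln t + 1)^{1/2}`
for i.i.d. samples `X_1, X_2, …` with law `μ`. -/
theorem stmt7 (k : ℕ) (hk : 1 ≤ k) (C₀ : ℝ) (hC₀ : 1 ≤ C₀) :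
    ∃ C : ℝ, 0 < C ∧
      ∀ (E Ω ι : Type) [MeasurableSpace E] [MeasurableSpace Ω] [Countable ι],
      ∀ (μ : Measure E) (P : Measure Ω),
        IsProbabilityMeasure μ → IsProbabilityMeasure P →
      ∀ (X : ℕ → Ω → E), (∀ i, Measurable (X i)) →
        ProbabilityTheory.iIndepFun X P →
        (∀ i, Measure.map (X i) P = μ) →
      ∀ (F : ι → E → ℝ), (∀ i, Measurable (F i)) →
        (∀ i x, F i x ∈ Set.Icc (-1 : ℝ) 1) →
      ∀ t : ℝ, 0 < t → t ≤ 1 →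
      (∀ ε : ℝ, 0 < ε →
        ∃ (m : ℕ) (g : Fin m → E → ℝ),
          (m : ℝ) ≤ (C₀ / (ε * Real.sqrt t)) ^ k ∧
          (∀ j, Measurable (g j)) ∧
          (∀ j x, g j x ∈ Set.Icc (-1 : ℝ) 1) ∧
          (∀ i : ι, ∃ j : Fin m, ∀ x : E, |F i x - g j x| ≤ ε)) →
      ∀ n : ℕ, 2 ≤ n →
        ENNReal.ofReal (1 - 1 / (2 * (n : ℝ))) ≤
          P {ω : Ω |
            (⨆ i : ι,
              |(1 / (n : ℝ)) * ∑ j ∈ Finset.range n, F i (X j ω) - ∫ x, F i x ∂μ|)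
              ≤ C / Real.sqrt n * Real.sqrt (Real.log n - Real.log t + 1)} := by
  have hlogC₀ : 0 ≤ Real.log C₀ := Real.log_nonneg hC₀
  have hlog4 : 0 < Real.log 4 := Real.log_pos (by norm_num)
  set K : ℝ := Real.log 4 + k * Real.log C₀ + k + 1 with hK_def
  have hk1 : (1:ℝ) ≤ k := by exact_mod_cast hk
  have hk0 : (0:ℝ) ≤ k := by linarith
  have hK : 0 < K := by positivity
  refine ⟨Real.sqrt (8*K) + 2, by positivity, ?_⟩
  intro E Ω ι _ _ _ μ P hμ hP X hX hindep hlaw F hF hFm t ht ht1 hnet n hn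
  -- basic numeric facts
  set N : ℝ := (n : ℝ) with hN_def
  have hN2 : (2:ℝ) ≤ N := by rw [hN_def]; exact_mod_cast hn
  have hN0 : (0:ℝ) < N := by linarith
  have hsN : 0 < Real.sqrt N := Real.sqrt_pos.2 hN0
  have hst : 0 < Real.sqrt t := Real.sqrt_pos.2 ht
  have hlogN : 0 ≤ Real.log N := Real.log_nonneg (by linarith)
  have hlogt : Real.log t ≤ 0 := Real.log_nonpos ht.le ht1
  set L : ℝ := Real.log N - Real.log t + 1 with hL_def
  have hL1 : 1 ≤ L := by simp only [hL_def]; linarith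
  have hL0 : 0 < L := by linarith
  set ε : ℝ := 1 / Real.sqrt N with hε_def
  have hε : 0 < ε := by positivity
  obtain ⟨m, g, hm, hgmeas, hgbdd, hnet'⟩ := hnet ε hε
  set A : Fin m → ℝ := fun j => ∫ x, g j x ∂μ with hA_def
  set a : ℝ := Real.sqrt (8*N*(K*L)) with ha_def
  have ha : 0 < a := Real.sqrt_pos.2 (by positivity)
  have ha2 : a^2 = 8*N*(K*L) := Real.sq_sqrt (by positivity)
  -- bounds on g and A
  have hgabs : ∀ j x, |g j x| ≤ 1 := fun j x => abs_le.2 ⟨(hgbdd j x).1, (hgbdd j x).2⟩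
  have hAabs : ∀ j, |A j| ≤ 1 := by
    intro j
    have := norm_integral_le_of_norm_le_const (μ := μ) (f := g j) (C := 1)
      (ae_of_all _ fun x => by simpa [Real.norm_eq_abs] using hgabs j x)
    simpa [Real.norm_eq_abs, measure_univ] using this
  -- the deviation variables
  set Y : Fin m → ℕ → Ω → ℝ := fun j i ω => g j (X i ω) - A j with hY_def
  have hYmeas : ∀ j i, Measurable (Y j i) :=
    fun j i => ((hgmeas j).comp (hX i)).sub measurable_const
  have hYindep : ∀ j, iIndepFun (Y j) P := by
    intro j
    exact hindep.comp (fun _ e => g j e - A j) (fun _ => (hgmeas j).sub measurable_const)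
  have hYbdd : ∀ j i ω, |Y j i ω| ≤ 2 := by
    intro j i ω
    have h1 := hgabs j (X i ω)
    have h2 := hAabs j
    simp only [hY_def]
    rw [abs_le] at h1 h2 ⊢
    constructor <;> linarith [h1.1, h1.2, h2.1, h2.2]
  have hYmean : ∀ j i, ∫ ω, Y j i ω ∂P = 0 := by
    intro j i
    have hint : Integrable (fun ω => g j (X i ω)) P :=
      integrable_of_bound P _ ((hgmeas j).comp (hX i)) 1 (fun ω => hgabs j (X i ω))
    have hmap : ∫ ω, g j (X i ω) ∂P = ∫ x, g j x ∂μ := by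
      rw [← hlaw i, integral_map (hX i).aemeasurable (hgmeas j).aestronglyMeasurable]
    simp only [hY_def]
    rw [integral_sub hint (integrable_const _), integral_const, hmap]
    simp [hA_def, measure_univ]
  -- bad events
  set Bad : Fin m → Set Ω := fun j => {ω | a ≤ |∑ i ∈ Finset.range n, Y j i ω|} with hBad_def
  have hBadj_meas : ∀ j, MeasurableSet (Bad j) := by
    intro j
    exact measurableSet_le measurable_const
      ((Finset.measurable_sum _ (fun i _ => hYmeas j i)).abs)
  have hBad_meas : MeasurableSet (⋃ j, Bad j) := MeasurableSet.iUnion hBadj_meas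
  have hBadj_prob : ∀ j, (P (Bad j)).toReal ≤ 2 * Real.exp (-(a^2) / (8*N)) :=
    fun j => hoeffding_aux P (Y j) (hYmeas j) (hYindep j) (hYbdd j) (hYmean j) n
      (by omega) a ha
  -- union bound
  have hBad_prob : (P (⋃ j, Bad j)).toReal ≤ (m:ℝ) * (2 * Real.exp (-(a^2) / (8*N))) := by
    calc (P (⋃ j, Bad j)).toReal ≤ (∑ j : Fin m, P (Bad j)).toReal :=
          ENNReal.toReal_mono (ENNReal.sum_lt_top.2 (fun j _ => measure_lt_top P _)).ne (measure_iUnion_fintype_le _ _)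
      _ = ∑ j : Fin m, (P (Bad j)).toReal := by
          rw [ENNReal.toReal_sum (fun j _ => measure_ne_top _ _)]
      _ ≤ ∑ _j : Fin m, 2 * Real.exp (-(a^2) / (8*N)) :=
          Finset.sum_le_sum (fun j _ => hBadj_prob j)
      _ = (m:ℝ) * (2 * Real.exp (-(a^2) / (8*N))) := by
          rw [Finset.sum_const, Finset.card_univ, Fintype.card_fin, nsmul_eq_mul]
  -- numeric: the union bound is at most 1/(2N)
  have hexp_eq : -(a^2) / (8*N) = -(K*L) := by rw [ha2]; field_simp
  set B : ℝ := C₀ * Real.sqrt N / Real.sqrt t with hB_def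
  have hB0 : 0 < B := by positivity
  have hsN1 : 1 ≤ Real.sqrt N := by
    rw [show (1:ℝ) = Real.sqrt 1 by simp]
    exact Real.sqrt_le_sqrt (by linarith)
  have hst1 : Real.sqrt t ≤ 1 := by
    rw [show (1:ℝ) = Real.sqrt 1 by simp]
    exact Real.sqrt_le_sqrt (by linarith)
  have hmB : (m:ℝ) ≤ B^k := by
    refine hm.trans (le_of_eq ?_)
    congr 1
    rw [hB_def, hε_def]
    field_simp
  have hmain : B^k * (4*N) ≤ Real.exp (K*L) := by
    have hlogB : Real.log B = Real.log C₀ + Real.log N / 2 - Real.log t / 2 := by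
      rw [hB_def, Real.log_div (by positivity) hst.ne', Real.log_mul (by positivity) hsN.ne',
        Real.log_sqrt hN0.le, Real.log_sqrt ht.le]
    have h1 : B^k * (4*N) = Real.exp ((k:ℝ) * Real.log B + Real.log (4*N)) := by
      rw [Real.exp_add, Real.exp_nat_mul, Real.exp_log hB0, Real.exp_log (by positivity)]
    rw [h1]
    apply Real.exp_le_exp.2
    have hlog4N : Real.log (4*N) = Real.log 4 + Real.log N := Real.log_mul (by norm_num) hN0.ne'
    rw [hlog4N, hlogB, hK_def, hL_def]
    nlinarith [mul_nonneg hlogC₀ hlogN, mul_nonneg hlogC₀ (neg_nonneg.2 hlogt),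
      mul_nonneg hlogN (neg_nonneg.2 hlogt), mul_nonneg (mul_nonneg hk0 hlogC₀) hlogN,
      mul_nonneg (mul_nonneg hk0 hlogC₀) (neg_nonneg.2 hlogt),
      mul_nonneg hlog4.le hlogN, mul_nonneg hlog4.le (neg_nonneg.2 hlogt),
      mul_nonneg (sub_nonneg.2 hk1) hlogN, mul_nonneg (sub_nonneg.2 hk1) (neg_nonneg.2 hlogt),
      mul_nonneg (sub_nonneg.2 hk1) hlogC₀]
  have hnum : (m:ℝ) * (2 * Real.exp (-(K*L))) ≤ 1/(2*N) := by
    calc (m:ℝ) * (2 * Real.exp (-(K*L)))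
        ≤ B^k * (2 * Real.exp (-(K*L))) :=
          mul_le_mul_of_nonneg_right hmB (by positivity)
      _ = (B^k * (4*N)) * Real.exp (-(K*L)) / (2*N) := by field_simp; ring
      _ ≤ Real.exp (K*L) * Real.exp (-(K*L)) / (2*N) := by gcongr
      _ = 1/(2*N) := by rw [← Real.exp_add]; simp
  have hBadP : P (⋃ j, Bad j) ≤ ENNReal.ofReal (1/(2*N)) := by
    rw [← ENNReal.ofReal_toReal (measure_ne_top P _)]
    apply ENNReal.ofReal_le_ofReal
    calc (P (⋃ j, Bad j)).toReal ≤ (m:ℝ) * (2 * Real.exp (-(a^2) / (8*N))) := hBad_prob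
      _ = (m:ℝ) * (2 * Real.exp (-(K*L))) := by rw [hexp_eq]
      _ ≤ 1/(2*N) := hnum
  -- the good event has the required probability
  have hgood : ENNReal.ofReal (1 - 1/(2*N)) ≤ P (⋃ j, Bad j)ᶜ := by
    rw [prob_compl_eq_one_sub hBad_meas,
      ENNReal.ofReal_sub _ (by positivity), ENNReal.ofReal_one]
    exact tsub_le_tsub_left hBadP 1
  refine le_trans hgood (measure_mono ?_)
  -- the good event is contained in the target event
  intro ω hω
  simp only [Set.mem_compl_iff, Set.mem_iUnion, not_exists, hBad_def, Set.mem_setOf_eq,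
    not_le] at hω
  simp only [Set.mem_setOf_eq]
  -- handy equalities for the final bound
  have hNsq : Real.sqrt N * Real.sqrt N = N := Real.mul_self_sqrt hN0.le
  have ha_eq : a = Real.sqrt (8*K) * Real.sqrt L * Real.sqrt N := by
    rw [ha_def, show 8*N*(K*L) = 8*K*L*N by ring,
      Real.sqrt_mul (by positivity : (0:ℝ) ≤ 8*K*L),
      Real.sqrt_mul (by positivity : (0:ℝ) ≤ 8*K)]
  have haN : a / N = Real.sqrt (8*K) * Real.sqrt L / Real.sqrt N := by
    rw [ha_eq, div_eq_div_iff hN0.ne' hsN.ne', mul_assoc, hNsq]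
  have hsL : 1 ≤ Real.sqrt L := by
    rw [show (1:ℝ) = Real.sqrt 1 by simp]
    exact Real.sqrt_le_sqrt hL1
  have hfinal : 2*ε + a/N ≤ (Real.sqrt (8*K) + 2) / Real.sqrt N * Real.sqrt L := by
    rw [haN, hε_def, div_mul_eq_mul_div]
    rw [show 2*(1/Real.sqrt N) + Real.sqrt (8*K) * Real.sqrt L / Real.sqrt N
        = (2 + Real.sqrt (8*K) * Real.sqrt L) / Real.sqrt N by ring]
    refine (div_le_div_iff_of_pos_right hsN).2 ?_
    have hexpand : (Real.sqrt (8*K) + 2) * Real.sqrt L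
        = Real.sqrt (8*K) * Real.sqrt L + 2 * Real.sqrt L := by ring
    rw [hexpand]
    linarith [hsL]
  refine Real.iSup_le (fun i => ?_) (by positivity)
  obtain ⟨j, hj⟩ := hnet' i
  have hωj := (hω j).le
  -- rewrite the bad-event sum
  have hsum_eq : ∑ l ∈ Finset.range n, Y j l ω
      = (∑ l ∈ Finset.range n, g j (X l ω)) - N * A j := by
    simp only [hY_def]
    rw [Finset.sum_sub_distrib, Finset.sum_const, Finset.card_range, nsmul_eq_mul, hN_def]
  set S1 : ℝ := ∑ l ∈ Finset.range n, F i (X l ω) with hS1_def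
  set S2 : ℝ := ∑ l ∈ Finset.range n, g j (X l ω) with hS2_def
  have h_y : |S2 - N * A j| ≤ a := by rw [← hsum_eq]; exact hωj
  have h_x : |S1 - S2| ≤ N * ε := by
    rw [hS1_def, hS2_def, ← Finset.sum_sub_distrib]
    refine (Finset.abs_sum_le_sum_abs _ _).trans ?_
    have := Finset.sum_le_card_nsmul (Finset.range n) (fun l => |F i (X l ω) - g j (X l ω)|) ε
      (fun l _ => hj (X l ω))
    rwa [Finset.card_range, nsmul_eq_mul] at this
  have hFint : Integrable (F i) μ := integrable_of_bound μ _ (hF i) 1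
      (fun x => abs_le.2 ⟨(hFm i x).1, (hFm i x).2⟩)
  have hgint : Integrable (g j) μ := integrable_of_bound μ _ (hgmeas j) 1
      (fun x => hgabs j x)
  have h_z : |A j - ∫ x, F i x ∂μ| ≤ ε := by
    have heq : A j - ∫ x, F i x ∂μ = ∫ x, (g j x - F i x) ∂μ := by
      rw [integral_sub hgint hFint]
    rw [heq]
    have := norm_integral_le_of_norm_le_const (μ := μ) (f := fun x => g j x - F i x) (C := ε)
      (ae_of_all _ fun x => by
        rw [Real.norm_eq_abs, abs_sub_comm]; exact hj x)
    simpa [Real.norm_eq_abs, measure_univ] using this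
  have hdecomp : (1 / N) * S1 - ∫ x, F i x ∂μ
      = (1/N)*(S1 - S2) + (1/N)*(S2 - N * A j) + (A j - ∫ x, F i x ∂μ) := by
    field_simp
    ring
  calc |(1 / N) * S1 - ∫ x, F i x ∂μ|
      = |(1/N)*(S1 - S2) + (1/N)*(S2 - N * A j) + (A j - ∫ x, F i x ∂μ)| := by rw [hdecomp]
    _ ≤ |(1/N)*(S1 - S2)| + |(1/N)*(S2 - N * A j)| + |A j - ∫ x, F i x ∂μ| :=
        (abs_add_le _ _).trans (by gcongr; exact abs_add_le _ _)
    _ ≤ ε + a/N + ε := by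
        have e1 : |(1/N)*(S1 - S2)| ≤ ε := by
          rw [abs_mul, abs_of_pos (by positivity : (0:ℝ) < 1/N)]
          calc (1/N) * |S1 - S2| ≤ (1/N) * (N * ε) := by
                exact mul_le_mul_of_nonneg_left h_x (by positivity)
            _ = ε := by field_simp
        have e2 : |(1/N)*(S2 - N * A j)| ≤ a/N := by
          rw [abs_mul, abs_of_pos (by positivity : (0:ℝ) < 1/N)]
          calc (1/N) * |S2 - N * A j| ≤ (1/N) * a :=
                mul_le_mul_of_nonneg_left h_y (by positivity)
            _ = a/N := by ring
        linarith
    _ ≤ (Real.sqrt (8*K) + 2) / Real.sqrt N * Real.sqrt L := by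
        rw [show ε + a/N + ε = 2*ε + a/N by ring]; exact hfinal
end

section
/- Let n ≥ 1, let t > 0, c > 0, W > 0, let A and B be symmetric n×n real matrices with nonnegative entries such that (1/n)∑_{j=1}^n B_{ij} ≤ W for every i, and suppose that for every v ∈ ℝⁿ with ∑_i v_i = 0 one has (1/(n²·t))·∑_{i,j} A_{ij}(v_i−v_j)² ≥ (c/n)·∑_i v_i². If u ∈ ℝⁿ satisfies ∑_i u_i = 0 and (1/(n·t))·∑_{j=1}^n A_{ij}(u_i−u_j) = (1/n)·∑_{j=1}^n B_{ij} f_j for every i, where f ∈ ℝⁿ, then ((1/n)∑_i u_i²)^{1/2} ≤ (2W/c)·((1/n)∑_j f_j²)^{1/2}. -/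
/-- (Discrete stability estimate, Theorem `thm:bound_solution_bfu`.)
Let `A`, `B` be symmetric `n×n` matrices with nonnegative entries, with row averages of
`B` bounded by `W`, and suppose the discrete Poincaré inequality
`(1/(n²t))·∑_{i,j} A_{ij}(v_i−v_j)² ≥ (c/n)·∑_i v_i²` holds for all mean-zero `v`.
If `u` is mean-zero and solves `(1/(nt))∑_j A_{ij}(u_i−u_j) = (1/n)∑_j B_{ij} f_j`,
then `((1/n)∑ u_i²)^{1/2} ≤ (2W/c)·((1/n)∑ f_j²)^{1/2}`. -/
theorem stmt9 (n : ℕ) (hn : 1 ≤ n) (t c W : ℝ) (ht : 0 < t) (hc : 0 < c) (hW : 0 < W)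
    (A B : Matrix (Fin n) (Fin n) ℝ) (hAsymm : A.IsSymm) (hBsymm : B.IsSymm)
    (hA0 : ∀ i j, 0 ≤ A i j) (hB0 : ∀ i j, 0 ≤ B i j)
    (hBrow : ∀ i, (1 / (n : ℝ)) * ∑ j, B i j ≤ W)
    (hPoincare : ∀ v : Fin n → ℝ, (∑ i, v i) = 0 →
      (c / n) * ∑ i, (v i) ^ 2 ≤
        (1 / ((n : ℝ) ^ 2 * t)) * ∑ i, ∑ j, A i j * (v i - v j) ^ 2)
    (u f : Fin n → ℝ) (hu0 : (∑ i, u i) = 0)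
    (heq : ∀ i, (1 / ((n : ℝ) * t)) * ∑ j, A i j * (u i - u j) =
      (1 / (n : ℝ)) * ∑ j, B i j * f j) :
    Real.sqrt ((1 / (n : ℝ)) * ∑ i, (u i) ^ 2) ≤
      (2 * W / c) * Real.sqrt ((1 / (n : ℝ)) * ∑ j, (f j) ^ 2) := by
  have hN : (0:ℝ) < n := by exact_mod_cast hn
  set N : ℝ := (n : ℝ) with hNdef
  set Su := ∑ i, (u i) ^ 2 with hSu
  set Sf := ∑ j, (f j) ^ 2 with hSf
  have hSu0 : 0 ≤ Su := Finset.sum_nonneg fun i _ => sq_nonneg _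
  have hSf0 : 0 ≤ Sf := Finset.sum_nonneg fun i _ => sq_nonneg _
  -- Energy identity: E = 2 * ∑∑ A u_i (u_i - u_j)
  have hE : (∑ i, ∑ j, A i j * (u i - u j) ^ 2)
      = 2 * ∑ i, ∑ j, A i j * (u i * (u i - u j)) := by
    have hswap : (∑ i, ∑ j, A i j * (u j * (u j - u i)))
        = ∑ i, ∑ j, A i j * (u i * (u i - u j)) := by
      rw [Finset.sum_comm]
      refine Finset.sum_congr rfl fun i _ => Finset.sum_congr rfl fun j _ => ?_
      rw [hAsymm.apply i j]
    calc (∑ i, ∑ j, A i j * (u i - u j) ^ 2)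
        = (∑ i, ∑ j, (A i j * (u i * (u i - u j)) + A i j * (u j * (u j - u i)))) := by
          refine Finset.sum_congr rfl fun i _ => Finset.sum_congr rfl fun j _ => ?_
          ring
      _ = (∑ i, ∑ j, A i j * (u i * (u i - u j)))
            + ∑ i, ∑ j, A i j * (u j * (u j - u i)) := by
          rw [← Finset.sum_add_distrib]
          exact Finset.sum_congr rfl fun i _ => Finset.sum_add_distrib
      _ = 2 * ∑ i, ∑ j, A i j * (u i * (u i - u j)) := by rw [hswap]; ring
  -- Tested equation summed against u
  have hsum : (1 / (N * t)) * ∑ i, ∑ j, A i j * (u i * (u i - u j))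
      = (1 / N) * ∑ i, ∑ j, B i j * (u i * f j) := by
    have h1 : ∀ i, (1 / (N * t)) * ∑ j, A i j * (u i * (u i - u j))
        = (1 / N) * ∑ j, B i j * (u i * f j) := by
      intro i
      have := heq i
      have h2 : (∑ j, A i j * (u i * (u i - u j))) = u i * ∑ j, A i j * (u i - u j) := by
        rw [Finset.mul_sum]; exact Finset.sum_congr rfl fun j _ => by ring
      have h3 : (∑ j, B i j * (u i * f j)) = u i * ∑ j, B i j * f j := by
        rw [Finset.mul_sum]; exact Finset.sum_congr rfl fun j _ => by ring
      rw [h2, h3]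
      calc 1 / (N * t) * (u i * ∑ j, A i j * (u i - u j))
          = u i * (1 / (N * t) * ∑ j, A i j * (u i - u j)) := by ring
        _ = u i * (1 / N * ∑ j, B i j * f j) := by rw [this]
        _ = 1 / N * (u i * ∑ j, B i j * f j) := by ring
    calc (1 / (N * t)) * ∑ i, ∑ j, A i j * (u i * (u i - u j))
        = ∑ i, (1 / (N * t)) * ∑ j, A i j * (u i * (u i - u j)) := Finset.mul_sum _ _ _
      _ = ∑ i, (1 / N) * ∑ j, B i j * (u i * f j) := Finset.sum_congr rfl fun i _ => h1 i
      _ = (1 / N) * ∑ i, ∑ j, B i j * (u i * f j) := (Finset.mul_sum _ _ _).symm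
  -- Poincaré applied to u
  have hP := hPoincare u hu0
  have hkey : c * Su ≤ (2 / N) * ∑ i, ∑ j, B i j * (u i * f j) := by
    have hNt : N * t ≠ 0 := by positivity
    have hlhs : (1 / (N ^ 2 * t)) * ∑ i, ∑ j, A i j * (u i - u j) ^ 2
        = (2 / N) * ((1 / (N * t)) * ∑ i, ∑ j, A i j * (u i * (u i - u j))) := by
      rw [hE]; ring
    rw [hlhs, hsum] at hP
    have : c / N * Su ≤ 2 / N * (1 / N * ∑ i, ∑ j, B i j * (u i * f j)) := hP
    have hmul := mul_le_mul_of_nonneg_left this (le_of_lt hN)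
    calc c * Su = N * (c / N * Su) := by field_simp
      _ ≤ N * (2 / N * (1 / N * ∑ i, ∑ j, B i j * (u i * f j))) := hmul
      _ = (2 / N) * ∑ i, ∑ j, B i j * (u i * f j) := by field_simp
  -- Bound the RHS via weighted AM-GM and row/column sums
  have hrow : ∀ i, ∑ j, B i j ≤ N * W := by
    intro i
    have := hBrow i
    have := mul_le_mul_of_nonneg_left this (le_of_lt hN)
    calc ∑ j, B i j = N * (1 / N * ∑ j, B i j) := by field_simp
      _ ≤ N * W := this
  have hcol : ∀ j, ∑ i, B i j ≤ N * W := by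
    intro j
    have : (∑ i, B i j) = ∑ i, B j i :=
      Finset.sum_congr rfl fun i _ => hBsymm.apply j i
    rw [this]; exact hrow j
  have hRHS : (∑ i, ∑ j, B i j * (u i * f j))
      ≤ (c / (4 * W)) * (N * W) * Su + (W / c) * (N * W) * Sf := by
    have hbd : (∑ i, ∑ j, B i j * (u i * f j))
        ≤ ∑ i, ∑ j, B i j * ((c / (4 * W)) * (u i) ^ 2 + (W / c) * (f j) ^ 2) := by
      refine Finset.sum_le_sum fun i _ => Finset.sum_le_sum fun j _ => ?_
      refine mul_le_mul_of_nonneg_left ?_ (hB0 i j)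
      rw [← sub_nonneg]
      have hid : (c / (4 * W)) * (u i) ^ 2 + (W / c) * (f j) ^ 2 - u i * f j
          = (c * u i - 2 * W * f j) ^ 2 / (4 * W * c) := by field_simp; ring
      rw [hid]; positivity
    refine hbd.trans ?_
    have t1 : (∑ i, ∑ j, B i j * ((c / (4 * W)) * (u i) ^ 2))
        = (c / (4 * W)) * ∑ i, (u i) ^ 2 * ∑ j, B i j := by
      rw [Finset.mul_sum]
      refine Finset.sum_congr rfl fun i _ => ?_
      rw [Finset.mul_sum, Finset.mul_sum]
      exact Finset.sum_congr rfl fun j _ => by ring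
    have t2 : (∑ i, ∑ j, B i j * ((W / c) * (f j) ^ 2))
        = (W / c) * ∑ j, (f j) ^ 2 * ∑ i, B i j := by
      rw [Finset.sum_comm, Finset.mul_sum]
      refine Finset.sum_congr rfl fun j _ => ?_
      rw [Finset.mul_sum, Finset.mul_sum]
      exact Finset.sum_congr rfl fun i _ => by ring
    have hsplit : (∑ i, ∑ j, B i j * ((c / (4 * W)) * (u i) ^ 2 + (W / c) * (f j) ^ 2))
        = (c / (4 * W)) * (∑ i, (u i) ^ 2 * ∑ j, B i j)
          + (W / c) * (∑ j, (f j) ^ 2 * ∑ i, B i j) := by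
      simp_rw [mul_add, Finset.sum_add_distrib]
      rw [t1, t2]
    rw [hsplit]
    have h1 : (∑ i, (u i) ^ 2 * ∑ j, B i j) ≤ (N * W) * Su := by
      rw [hSu, Finset.mul_sum]
      refine Finset.sum_le_sum fun i _ => ?_
      rw [mul_comm (N * W)]
      exact mul_le_mul_of_nonneg_left (hrow i) (sq_nonneg _)
    have h2 : (∑ j, (f j) ^ 2 * ∑ i, B i j) ≤ (N * W) * Sf := by
      rw [hSf, Finset.mul_sum]
      refine Finset.sum_le_sum fun j _ => ?_
      rw [mul_comm (N * W)]
      exact mul_le_mul_of_nonneg_left (hcol j) (sq_nonneg _)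
    have e1 : 0 ≤ c / (4 * W) := by positivity
    have e2 : 0 ≤ W / c := by positivity
    nlinarith [mul_le_mul_of_nonneg_left h1 e1, mul_le_mul_of_nonneg_left h2 e2]
  -- Combine
  have hfinal : Su ≤ (2 * W / c) ^ 2 * Sf := by
    have := hkey.trans (by
      have := mul_le_mul_of_nonneg_left hRHS (by positivity : (0:ℝ) ≤ 2 / N)
      exact this)
    have hsimp : (2 / N) * ((c / (4 * W)) * (N * W) * Su + (W / c) * (N * W) * Sf)
        = (c / 2) * Su + (2 * W ^ 2 / c) * Sf := by field_simp; ring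
    rw [hsimp] at this
    have h2 : (c / 2) * Su ≤ (2 * W ^ 2 / c) * Sf := by linarith
    have h3 := mul_le_mul_of_nonneg_left h2 (by positivity : (0:ℝ) ≤ 2 / c)
    calc Su = (2 / c) * ((c / 2) * Su) := by field_simp
      _ ≤ (2 / c) * ((2 * W ^ 2 / c) * Sf) := h3
      _ = (2 * W / c) ^ 2 * Sf := by field_simp
  calc Real.sqrt ((1 / N) * Su)
      ≤ Real.sqrt ((2 * W / c) ^ 2 * ((1 / N) * Sf)) := by
        apply Real.sqrt_le_sqrt
        have h1N : 0 ≤ 1 / N := by positivity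
        calc (1 / N) * Su ≤ (1 / N) * ((2 * W / c) ^ 2 * Sf) :=
              mul_le_mul_of_nonneg_left hfinal h1N
          _ = (2 * W / c) ^ 2 * ((1 / N) * Sf) := by ring
    _ = (2 * W / c) * Real.sqrt ((1 / N) * Sf) := by
        rw [Real.sqrt_mul (sq_nonneg _), Real.sqrt_sq (by positivity : (0:ℝ) ≤ 2 * W / c)]
end

section
/- Let δ₀ > 0 and B > 0, and let R : [0,∞) → [0,B] be measurable with R(r) = 0 for all r > 1 and R(r) ≥ δ₀ for all 0 ≤ r ≤ 1/2. Let μ be a finite measure on ℝ^d, let t > 0 and t' = t/18. Then for all points x_i, x_j ∈ ℝ^d: ∬ R(‖x−x_i‖²/(4t'))·R(‖x_j−y‖²/(4t'))·R(‖x−y‖²/(4t')) dμ(x)dμ(y) ≤ (B³·μ(ℝ^d)²/δ₀)·R(‖x_i−x_j‖²/(4t)). -/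
open MeasureTheory

/-- (Triple-kernel bound.)  If `R : [0,∞) → [0,B]` is supported in
`[0,1]` and `R ≥ δ₀` on `[0,1/2]`, `μ` is a finite measure on `ℝ^d`, `t > 0` and
`t' = t/18`, then for all `x_i, x_j`,
`∬ R(‖x−x_i‖²/(4t'))·R(‖x_j−y‖²/(4t'))·R(‖x−y‖²/(4t')) dμ(x)dμ(y)
  ≤ (B³·μ(ℝ^d)²/δ₀)·R(‖x_i−x_j‖²/(4t))`. -/
theorem stmt11 (d : ℕ) (δ₀ B : ℝ) (hδ₀ : 0 < δ₀) (hB : 0 < B)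
    (R : ℝ → ℝ) (hRmeas : Measurable R)
    (hR0 : ∀ r : ℝ, 0 ≤ r → 0 ≤ R r) (hRB : ∀ r : ℝ, 0 ≤ r → R r ≤ B)
    (hsupp : ∀ r : ℝ, 1 < r → R r = 0)
    (hlow : ∀ r : ℝ, 0 ≤ r → r ≤ 1 / 2 → δ₀ ≤ R r)
    (μ : Measure (EuclideanSpace ℝ (Fin d))) [IsFiniteMeasure μ]
    (t : ℝ) (ht : 0 < t) (xi xj : EuclideanSpace ℝ (Fin d)) :
    (∫ a, ∫ b, R (‖a - xi‖ ^ 2 / (4 * (t / 18))) * R (‖xj - b‖ ^ 2 / (4 * (t / 18))) *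
        R (‖a - b‖ ^ 2 / (4 * (t / 18))) ∂μ ∂μ) ≤
      (B ^ 3 * ((μ Set.univ).toReal) ^ 2 / δ₀) * R (‖xi - xj‖ ^ 2 / (4 * t)) := by
  have ht' : 0 < 4 * (t / 18) := by linarith
  have hM : (0:ℝ) ≤ (μ Set.univ).toReal := ENNReal.toReal_nonneg
  set M := (μ Set.univ).toReal with hMdef
  have harg : (0:ℝ) ≤ ‖xi - xj‖ ^ 2 / (4 * t) := by positivity
  by_cases hcase : ‖xi - xj‖ ^ 2 / (4 * t) ≤ 1 / 2
  · -- kernel at scale t is at least δ₀; bound LHS by B³ M²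
    have hRδ : δ₀ ≤ R (‖xi - xj‖ ^ 2 / (4 * t)) := hlow _ harg hcase
    have hbound : ∀ a b : EuclideanSpace ℝ (Fin d),
        ‖R (‖a - xi‖ ^ 2 / (4 * (t / 18))) * R (‖xj - b‖ ^ 2 / (4 * (t / 18))) *
          R (‖a - b‖ ^ 2 / (4 * (t / 18)))‖ ≤ B ^ 3 := by
      intro a b
      have h1 : (0:ℝ) ≤ ‖a - xi‖ ^ 2 / (4 * (t / 18)) := by positivity
      have h2 : (0:ℝ) ≤ ‖xj - b‖ ^ 2 / (4 * (t / 18)) := by positivity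
      have h3 : (0:ℝ) ≤ ‖a - b‖ ^ 2 / (4 * (t / 18)) := by positivity
      rw [Real.norm_eq_abs, abs_of_nonneg (by
        exact mul_nonneg (mul_nonneg (hR0 _ h1) (hR0 _ h2)) (hR0 _ h3))]
      have : B ^ 3 = B * B * B := by ring
      rw [this]
      gcongr <;> first
        | exact hR0 _ h1 | exact hR0 _ h2 | exact hR0 _ h3
        | exact hRB _ h1 | exact hRB _ h2 | exact hRB _ h3
        | exact mul_nonneg (hR0 _ h1) (hR0 _ h2)
        | exact le_of_lt hB
    have hinner : ∀ a : EuclideanSpace ℝ (Fin d),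
        ‖∫ b, R (‖a - xi‖ ^ 2 / (4 * (t / 18))) * R (‖xj - b‖ ^ 2 / (4 * (t / 18))) *
          R (‖a - b‖ ^ 2 / (4 * (t / 18))) ∂μ‖ ≤ B ^ 3 * M := by
      intro a
      exact norm_integral_le_of_norm_le_const (Filter.Eventually.of_forall (hbound a))
    have houter : ‖∫ a, ∫ b, R (‖a - xi‖ ^ 2 / (4 * (t / 18))) *
        R (‖xj - b‖ ^ 2 / (4 * (t / 18))) * R (‖a - b‖ ^ 2 / (4 * (t / 18))) ∂μ ∂μ‖
          ≤ B ^ 3 * M * M :=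
      norm_integral_le_of_norm_le_const (Filter.Eventually.of_forall hinner)
    have hLHS : (∫ a, ∫ b, R (‖a - xi‖ ^ 2 / (4 * (t / 18))) *
        R (‖xj - b‖ ^ 2 / (4 * (t / 18))) * R (‖a - b‖ ^ 2 / (4 * (t / 18))) ∂μ ∂μ)
          ≤ B ^ 3 * M * M := le_trans (le_abs_self _) houter
    have hRHS : B ^ 3 * M * M ≤ (B ^ 3 * M ^ 2 / δ₀) * R (‖xi - xj‖ ^ 2 / (4 * t)) := by
      have h1 : B ^ 3 * M * M = (B ^ 3 * M ^ 2 / δ₀) * δ₀ := by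
        field_simp
      rw [h1]
      exact mul_le_mul_of_nonneg_left hRδ (by positivity)
    linarith
  · -- kernels at scale t' vanish identically
    push_neg at hcase
    have hzero : ∀ a b : EuclideanSpace ℝ (Fin d),
        R (‖a - xi‖ ^ 2 / (4 * (t / 18))) * R (‖xj - b‖ ^ 2 / (4 * (t / 18))) *
          R (‖a - b‖ ^ 2 / (4 * (t / 18))) = 0 := by
      intro a b
      by_cases h1 : 1 < ‖a - xi‖ ^ 2 / (4 * (t / 18))
      · rw [hsupp _ h1]; ring
      by_cases h2 : 1 < ‖xj - b‖ ^ 2 / (4 * (t / 18))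
      · rw [hsupp _ h2]; ring
      by_cases h3 : 1 < ‖a - b‖ ^ 2 / (4 * (t / 18))
      · rw [hsupp _ h3]; ring
      exfalso
      push_neg at h1 h2 h3
      have e1 : ‖a - xi‖ ^ 2 ≤ 4 * (t / 18) := by
        rw [div_le_one ht'] at h1; exact h1
      have e2 : ‖xj - b‖ ^ 2 ≤ 4 * (t / 18) := by
        rw [div_le_one ht'] at h2; exact h2
      have e3 : ‖a - b‖ ^ 2 ≤ 4 * (t / 18) := by
        rw [div_le_one ht'] at h3; exact h3
      have htri : ‖xi - xj‖ ≤ ‖a - xi‖ + ‖a - b‖ + ‖xj - b‖ := by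
        calc ‖xi - xj‖ = ‖(xi - a) + (a - b) + (b - xj)‖ := by
              congr 1; abel
          _ ≤ ‖(xi - a) + (a - b)‖ + ‖b - xj‖ := norm_add_le _ _
          _ ≤ ‖xi - a‖ + ‖a - b‖ + ‖b - xj‖ := by
              gcongr; exact norm_add_le _ _
          _ = ‖a - xi‖ + ‖a - b‖ + ‖xj - b‖ := by
              rw [norm_sub_rev xi a, norm_sub_rev b xj]
      have hs : ‖xi - xj‖ ^ 2 ≤ 2 * t := by
        have hnn1 : (0:ℝ) ≤ ‖a - xi‖ := norm_nonneg _
        have hnn2 : (0:ℝ) ≤ ‖a - b‖ := norm_nonneg _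
        have hnn3 : (0:ℝ) ≤ ‖xj - b‖ := norm_nonneg _
        nlinarith [sq_nonneg (‖a - xi‖ - ‖a - b‖), sq_nonneg (‖a - xi‖ - ‖xj - b‖),
          sq_nonneg (‖a - b‖ - ‖xj - b‖), norm_nonneg (xi - xj)]
      rw [lt_div_iff₀ (by linarith : (0:ℝ) < 4 * t)] at hcase
      linarith
    have : (∫ a, ∫ b, R (‖a - xi‖ ^ 2 / (4 * (t / 18))) *
        R (‖xj - b‖ ^ 2 / (4 * (t / 18))) * R (‖a - b‖ ^ 2 / (4 * (t / 18))) ∂μ ∂μ) = 0 := by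
      simp only [hzero, integral_zero]
    rw [this]
    have hR : 0 ≤ R (‖xi - xj‖ ^ 2 / (4 * t)) := hR0 _ harg
    positivity
end

section
/- Let R : [0,∞) → [0,∞) be measurable and integrable, and set R̄(r) = ∫_r^∞ R(s) ds. Fix t > 0, C_t > 0, points x_1, …, x_n ∈ ℝ^d, and write R_t(x,y) = C_t·R(‖x−y‖²/(4t)) and R̄_t(x,y) = C_t·R̄(‖x−y‖²/(4t)). Let w(x) = (1/n)∑_{j=1}^n R_t(x,x_j) and assume w(x_i) ≠ 0 for every i. Let u : ℝ^d → ℝ, let λ ∈ ℝ with λ ≠ 0, and let v ∈ ℝⁿ satisfy: (a) (1/(n·t))·∑_{j=1}^n R_t(x_i,x_j)(v_i−v_j) = (1/n)·∑_{j=1}^n R̄_t(x_i,x_j)·u(x_j) for every i, and (b) (1/(n·w(x_i)))·∑_{j=1}^n R_t(x_i,x_j)·v_j + (t/(n·w(x_i)))·∑_{j=1}^n R̄_t(x_i,x_j)·u(x_j) = λ·u(x_i) for every i. Then v_i = λ·u(x_i) for every i, and the vector (u(x_1),…,u(x_n)) satisfies the discrete eigenvalue problem (1/t)·∑_{j=1}^n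 R_t(x_i,x_j)·(u(x_i)−u(x_j)) = (1/λ)·∑_{j=1}^n R̄_t(x_i,x_j)·u(x_j) for every i. -/
open MeasureTheory

/-- `R̄(r) = ∫_r^∞ R(s) ds`. -/
noncomputable def Rbar (R : ℝ → ℝ) (r : ℝ) : ℝ := ∫ s in Set.Ioi r, R s

/-- The kernel `R_t(a,b) = C_t·R(‖a−b‖²/(4t))`. -/
noncomputable def Rt {d : ℕ} (R : ℝ → ℝ) (Ct t : ℝ)
    (a b : EuclideanSpace ℝ (Fin d)) : ℝ :=
  Ct * R (‖a - b‖ ^ 2 / (4 * t))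

/-- The kernel `R̄_t(a,b) = C_t·R̄(‖a−b‖²/(4t))`. -/
noncomputable def Rbart {d : ℕ} (R : ℝ → ℝ) (Ct t : ℝ)
    (a b : EuclideanSpace ℝ (Fin d)) : ℝ :=
  Ct * Rbar R (‖a - b‖ ^ 2 / (4 * t))

/-- The empirical degree function `w(a) = (1/n)∑_j R_t(a,x_j)`. -/
noncomputable def degW {d : ℕ} (R : ℝ → ℝ) (Ct t : ℝ) (n : ℕ)
    (x : Fin n → EuclideanSpace ℝ (Fin d)) (a : EuclideanSpace ℝ (Fin d)) : ℝ :=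
  (1 / (n : ℝ)) * ∑ j, Rt R Ct t a (x j)

/-- (Proposition `prop:eigen_intergral_dis`, part 1.)  If `u` is an
eigenfunction of `T_{t,n}` with eigenvalue `λ ≠ 0` — i.e. `(v, u)` satisfies the discrete
system (a) and the eigen-relation (b) at the sample points — then `v_i = λ·u(x_i)` for
every `i`, and the restriction of `u` to the sample points is an eigenvector of the
discrete eigenvalue problem with eigenvalue `1/λ`. -/
theorem stmt12 (d n : ℕ) (R : ℝ → ℝ) (hRmeas : Measurable R)
    (hR0 : ∀ r : ℝ, 0 ≤ R r) (hRint : IntegrableOn R (Set.Ioi (0 : ℝ)))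
    (t Ct : ℝ) (ht : 0 < t) (hCt : 0 < Ct)
    (x : Fin n → EuclideanSpace ℝ (Fin d))
    (hw : ∀ i, degW R Ct t n x (x i) ≠ 0)
    (u : EuclideanSpace ℝ (Fin d) → ℝ) (lam : ℝ) (hlam : lam ≠ 0)
    (v : Fin n → ℝ)
    (ha : ∀ i, (1 / ((n : ℝ) * t)) * ∑ j, Rt R Ct t (x i) (x j) * (v i - v j) =
      (1 / (n : ℝ)) * ∑ j, Rbart R Ct t (x i) (x j) * u (x j))
    (hb : ∀ i, (1 / ((n : ℝ) * degW R Ct t n x (x i))) *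
        (∑ j, Rt R Ct t (x i) (x j) * v j) +
      (t / ((n : ℝ) * degW R Ct t n x (x i))) *
        (∑ j, Rbart R Ct t (x i) (x j) * u (x j)) = lam * u (x i)) :
    (∀ i, v i = lam * u (x i)) ∧
    (∀ i, (1 / t) * ∑ j, Rt R Ct t (x i) (x j) * (u (x i) - u (x j)) =
      (1 / lam) * ∑ j, Rbart R Ct t (x i) (x j) * u (x j)) := by
  have key : ∀ i, v i = lam * u (x i) := by
    intro i
    have hn : (n : ℝ) ≠ 0 := Nat.cast_ne_zero.mpr (Fin.pos i).ne'
    have hWne := hw i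
    have ha' := ha i
    have hb' := hb i
    set W := degW R Ct t n x (x i) with hWdef
    have hnW : (n : ℝ) * W = ∑ j, Rt R Ct t (x i) (x j) := by
      rw [hWdef]; unfold degW; field_simp
    have hsum : ∑ j, Rt R Ct t (x i) (x j) * (v i - v j)
        = v i * ((n : ℝ) * W) - ∑ j, Rt R Ct t (x i) (x j) * v j := by
      rw [hnW, Finset.mul_sum, ← Finset.sum_sub_distrib]
      exact Finset.sum_congr rfl fun j _ => by ring
    rw [hsum] at ha'
    set A := ∑ j, Rt R Ct t (x i) (x j) * v j with hA
    set B := ∑ j, Rbart R Ct t (x i) (x j) * u (x j) with hB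
    field_simp at ha' hb'
    have hW : W ≠ 0 := hWne
    have h1 : v i * ((n:ℝ) * W) - A = t * B :=
      mul_right_cancel₀ hn (by linear_combination (n:ℝ) * ha')
    have h2 : v i * ((n:ℝ) * W) = lam * u (x i) * ((n:ℝ) * W) := by linarith
    exact mul_right_cancel₀ (mul_ne_zero hn hW) h2
  refine ⟨key, fun i => ?_⟩
  have hn : (n : ℝ) ≠ 0 := Nat.cast_ne_zero.mpr (Fin.pos i).ne'
  have ha' := ha i
  have hsum : ∑ j, Rt R Ct t (x i) (x j) * (v i - v j)
      = lam * ∑ j, Rt R Ct t (x i) (x j) * (u (x i) - u (x j)) := by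
    rw [Finset.mul_sum]
    exact Finset.sum_congr rfl fun j _ => by rw [key i, key j]; ring
  rw [hsum] at ha'
  field_simp at ha' ⊢
  have := mul_right_cancel₀ hn (show (∑ j, Rt R Ct t (x i) (x j) * (u (x i) - u (x j))) * lam * (n:ℝ)
    = (∑ j, Rbart R Ct t (x i) (x j) * u (x j)) * t * (n:ℝ) by linear_combination (n:ℝ) * ha')
  linarith
end

section
/- Let R : [0,∞) → [0,∞) be measurable and integrable, set R̄(r) = ∫_r^∞ R(s) ds, fix t > 0, C_t > 0, points x_1, …, x_n ∈ ℝ^d, and write R_t(x,y) = C_t·R(‖x−y‖²/(4t)) and R̄_t(x,y) = C_t·R̄(‖x−y‖²/(4t)). Let w(x) = (1/n)∑_{j=1}^n R_t(x,x_j) and assume w(x) > 0 for every x ∈ ℝ^d. Suppose u ∈ ℝⁿ and λ ≠ 0 satisfy the discrete eigenvalue problem (1/t)·∑_{j=1}^n R_t(x_i,x_j)(u_i−u_j) = λ·∑_{j=1}^n R̄_t(x_i,x_j)·u_j for every i. Define the function g(x) = (λ·t·∑_{j=1}^n R̄_t(x,x_j)·u_j + ∑_{j=1}^n R_t(x,x_j)·u_j)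 / ∑_{j=1}^n R_t(x,x_j). Then: (i) g(x_i) = u_i for every i; (ii) the vector v = (u_1/λ, …, u_n/λ) satisfies (1/(n·t))·∑_{j=1}^n R_t(x_i,x_j)(v_i−v_j) = (1/n)·∑_{j=1}^n R̄_t(x_i,x_j)·g(x_j) for every i; and (iii) for every x ∈ ℝ^d, (1/(n·w(x)))·∑_{j=1}^n R_t(x,x_j)·v_j + (t/(n·w(x)))·∑_{j=1}^n R̄_t(x,x_j)·g(x_j) = (1/λ)·g(x); that is, g is an eigenfunction of the operator T_{t,n} with eigenvalue 1/λ. -/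
open MeasureTheory

/-- The kernel extension `I_λ(u)` of a discrete eigenvector `u`. -/
noncomputable def kernelExt {d : ℕ} (R : ℝ → ℝ) (Ct t : ℝ) (n : ℕ)
    (x : Fin n → EuclideanSpace ℝ (Fin d)) (u : Fin n → ℝ) (lam : ℝ)
    (y : EuclideanSpace ℝ (Fin d)) : ℝ :=
  (lam * t * ∑ j, Rbart R Ct t y (x j) * u j + ∑ j, Rt R Ct t y (x j) * u j) /
    ∑ j, Rt R Ct t y (x j)

/-- (Proposition `prop:eigen_intergral_dis`, part 2.)  If `u ∈ ℝⁿ`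
and `λ ≠ 0` satisfy the discrete eigenvalue problem
`(1/t)∑_j R_t(x_i,x_j)(u_i−u_j) = λ∑_j R̄_t(x_i,x_j)u_j`, then the kernel extension
`g = I_λ(u)` satisfies `g(x_i) = u_i`, the vector `v = u/λ` solves the discrete system
with data `g`, and `g` is an eigenfunction of `T_{t,n}` with eigenvalue `1/λ`. -/
theorem stmt13 (d n : ℕ) (R : ℝ → ℝ) (hRmeas : Measurable R)
    (hR0 : ∀ r : ℝ, 0 ≤ R r) (hRint : IntegrableOn R (Set.Ioi (0 : ℝ)))
    (t Ct : ℝ) (ht : 0 < t) (hCt : 0 < Ct)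
    (x : Fin n → EuclideanSpace ℝ (Fin d))
    (hw : ∀ y : EuclideanSpace ℝ (Fin d), 0 < degW R Ct t n x y)
    (u : Fin n → ℝ) (lam : ℝ) (hlam : lam ≠ 0)
    (heig : ∀ i, (1 / t) * ∑ j, Rt R Ct t (x i) (x j) * (u i - u j) =
      lam * ∑ j, Rbart R Ct t (x i) (x j) * u j) :
    (∀ i, kernelExt R Ct t n x u lam (x i) = u i) ∧
    (∀ i, (1 / ((n : ℝ) * t)) * ∑ j, Rt R Ct t (x i) (x j) * (u i / lam - u j / lam) =
      (1 / (n : ℝ)) * ∑ j, Rbart R Ct t (x i) (x j) * kernelExt R Ct t n x u lam (x j)) ∧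
    (∀ y : EuclideanSpace ℝ (Fin d),
      (1 / ((n : ℝ) * degW R Ct t n x y)) * (∑ j, Rt R Ct t y (x j) * (u j / lam)) +
        (t / ((n : ℝ) * degW R Ct t n x y)) *
          (∑ j, Rbart R Ct t y (x j) * kernelExt R Ct t n x u lam (x j)) =
      (1 / lam) * kernelExt R Ct t n x u lam y) := by
  -- `n > 0`
  have hn : 0 < (n : ℝ) := by
    rcases Nat.eq_zero_or_pos n with h | h
    · exfalso
      have := hw 0
      simp [degW, h] at this
    · exact_mod_cast h
  -- sums of the kernel are positive
  have hS : ∀ y : EuclideanSpace ℝ (Fin d), 0 < ∑ j, Rt R Ct t y (x j) := by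
    intro y
    have h1 := hw y
    unfold degW at h1
    have h2 : 0 < 1 / (n : ℝ) := by positivity
    nlinarith
  -- the key identity from the eigenvalue equation
  have key : ∀ i, lam * t * ∑ j, Rbart R Ct t (x i) (x j) * u j =
      u i * ∑ j, Rt R Ct t (x i) (x j) - ∑ j, Rt R Ct t (x i) (x j) * u j := by
    intro i
    have h := heig i
    have hsum : ∑ j, Rt R Ct t (x i) (x j) * (u i - u j) =
        u i * ∑ j, Rt R Ct t (x i) (x j) - ∑ j, Rt R Ct t (x i) (x j) * u j := by
      rw [Finset.mul_sum, ← Finset.sum_sub_distrib]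
      exact Finset.sum_congr rfl fun j _ => by ring
    rw [hsum] at h
    have ht' : t ≠ 0 := ht.ne'
    field_simp at h
    linarith
  -- part (i)
  have hg : ∀ i, kernelExt R Ct t n x u lam (x i) = u i := by
    intro i
    unfold kernelExt
    rw [key i]
    have hS' : (∑ j, Rt R Ct t (x i) (x j)) ≠ 0 := (hS (x i)).ne'
    field_simp
    ring
  refine ⟨hg, ?_, ?_⟩
  · -- part (ii)
    intro i
    have hrw : ∑ j, Rbart R Ct t (x i) (x j) * kernelExt R Ct t n x u lam (x j) =
        ∑ j, Rbart R Ct t (x i) (x j) * u j :=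
      Finset.sum_congr rfl fun j _ => by rw [hg j]
    rw [hrw]
    have hsum : ∑ j, Rt R Ct t (x i) (x j) * (u i / lam - u j / lam) =
        (1 / lam) * ∑ j, Rt R Ct t (x i) (x j) * (u i - u j) := by
      rw [Finset.mul_sum]
      exact Finset.sum_congr rfl fun j _ => by ring
    rw [hsum]
    have h := heig i
    have ht' : t ≠ 0 := ht.ne'
    field_simp
    field_simp at h
    nlinarith [h]
  · -- part (iii)
    intro y
    have hrw : ∑ j, Rbart R Ct t y (x j) * kernelExt R Ct t n x u lam (x j) =
        ∑ j, Rbart R Ct t y (x j) * u j :=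
      Finset.sum_congr rfl fun j _ => by rw [hg j]
    rw [hrw]
    have hsum : ∑ j, Rt R Ct t y (x j) * (u j / lam) =
        (1 / lam) * ∑ j, Rt R Ct t y (x j) * u j := by
      rw [Finset.mul_sum]
      exact Finset.sum_congr rfl fun j _ => by ring
    rw [hsum]
    unfold kernelExt degW
    have hS' : (∑ j, Rt R Ct t y (x j)) ≠ 0 := (hS y).ne'
    have hn' : (n : ℝ) ≠ 0 := hn.ne'
    field_simp
    ring
end

section
/- Let B > 0, W̄ > 0, w₀ > 0, V > 0, t > 0, C_t > 0, let R : [0,∞) → [0,B] and R̄ : [0,∞) → [0,∞) be measurable, let x_1, …, x_n ∈ ℝ^d, and let μ be a finite measure on ℝ^d. Set w(x) = (C_t/n)·∑_{i=1}^n R(‖x−x_i‖²/(4t)) and assume for every x ∈ ℝ^d that w(x) ≥ w₀ and (C_t/n)·∑_{i=1}^n R̄(‖x−x_i‖²/(4t)) ≤ W̄, and assume ∫ C_t·R(‖x−x_i‖²/(4t))/w(x) dμ(x) ≤ V for every i. Let u ∈ ℝⁿ and f : ℝ^d → ℝ, and define Tf(x) = (C_t/(n·w(x)))·∑_{i=1}^n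 R(‖x−x_i‖²/(4t))·u_i + (t·C_t/(n·w(x)))·∑_{i=1}^n R̄(‖x−x_i‖²/(4t))·f(x_i). Then ∫ |Tf(x)|² dμ(x) ≤ (2V/n)·∑_{i=1}^n u_i² + 2·t²·(W̄/w₀)²·(max_{1≤i≤n}|f(x_i)|)²·μ(ℝ^d). -/
open MeasureTheory

/-- (`L²` bound on the interpolated solution `T_{t,n}f`,
cf. Theorem `thm:bound-Ttn`.)  If `w(x) = (C_t/n)∑_i R(‖x−x_i‖²/(4t)) ≥ w₀ > 0`,
`(C_t/n)∑_i R̄(‖x−x_i‖²/(4t)) ≤ W̄` for all `x`, and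
`∫ C_t·R(‖x−x_i‖²/(4t))/w(x) dμ(x) ≤ V` for every `i`, then the function
`Tf(x) = (C_t/(n·w(x)))∑_i R(‖x−x_i‖²/(4t))u_i + (t·C_t/(n·w(x)))∑_i R̄(‖x−x_i‖²/(4t))f(x_i)`
satisfies `∫ |Tf|² dμ ≤ (2V/n)∑ u_i² + 2t²(W̄/w₀)²(max_i |f(x_i)|)²·μ(ℝ^d)`. -/
theorem stmt15 (d n : ℕ) (B W' w₀ V t Ct : ℝ)
    (hB : 0 < B) (hW' : 0 < W') (hw₀ : 0 < w₀) (hV : 0 < V) (ht : 0 < t) (hCt : 0 < Ct)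
    (R Rb : ℝ → ℝ) (hRmeas : Measurable R) (hRbmeas : Measurable Rb)
    (hR0 : ∀ r : ℝ, 0 ≤ R r) (hRB : ∀ r : ℝ, R r ≤ B) (hRb0 : ∀ r : ℝ, 0 ≤ Rb r)
    (x : Fin n → EuclideanSpace ℝ (Fin d))
    (μ : Measure (EuclideanSpace ℝ (Fin d))) [IsFiniteMeasure μ]
    (hw : ∀ y : EuclideanSpace ℝ (Fin d),
      w₀ ≤ (Ct / n) * ∑ i, R (‖y - x i‖ ^ 2 / (4 * t)))
    (hWbar : ∀ y : EuclideanSpace ℝ (Fin d),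
      (Ct / n) * ∑ i, Rb (‖y - x i‖ ^ 2 / (4 * t)) ≤ W')
    (hV' : ∀ i : Fin n,
      (∫ y, Ct * R (‖y - x i‖ ^ 2 / (4 * t)) /
          ((Ct / n) * ∑ l, R (‖y - x l‖ ^ 2 / (4 * t))) ∂μ) ≤ V)
    (u : Fin n → ℝ) (f : EuclideanSpace ℝ (Fin d) → ℝ) :
    (∫ y, ((Ct / ((n : ℝ) * ((Ct / n) * ∑ i, R (‖y - x i‖ ^ 2 / (4 * t))))) *
          (∑ i, R (‖y - x i‖ ^ 2 / (4 * t)) * u i) +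
        (t * Ct / ((n : ℝ) * ((Ct / n) * ∑ i, R (‖y - x i‖ ^ 2 / (4 * t))))) *
          (∑ i, Rb (‖y - x i‖ ^ 2 / (4 * t)) * f (x i))) ^ 2 ∂μ) ≤
      (2 * V / n) * ∑ i, (u i) ^ 2 +
        2 * t ^ 2 * (W' / w₀) ^ 2 * (⨆ i : Fin n, |f (x i)|) ^ 2 *
          (μ Set.univ).toReal := by
  classical
  have hn : 0 < n := by
    rcases Nat.eq_zero_or_pos n with h | h
    · exfalso
      have h0 := hw 0
      subst h
      simp at h0
      linarith
    · exact h
  have hnR : (0:ℝ) < n := Nat.cast_pos.mpr hn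
  set g : Fin n → EuclideanSpace ℝ (Fin d) → ℝ :=
    fun i y => R (‖y - x i‖ ^ 2 / (4 * t)) with hgdef
  set gb : Fin n → EuclideanSpace ℝ (Fin d) → ℝ :=
    fun i y => Rb (‖y - x i‖ ^ 2 / (4 * t)) with hgbdef
  set S : EuclideanSpace ℝ (Fin d) → ℝ := fun y => ∑ i, g i y with hSdef
  have hg0 : ∀ i y, 0 ≤ g i y := fun i y => hR0 _
  have hgB : ∀ i y, g i y ≤ B := fun i y => hRB _
  have hgb0 : ∀ i y, 0 ≤ gb i y := fun i y => hRb0 _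
  have hS1 : ∀ y, (n:ℝ) * w₀ ≤ Ct * S y := by
    intro y
    have h := mul_le_mul_of_nonneg_left (hw y) hnR.le
    calc (n:ℝ) * w₀ ≤ (n:ℝ) * ((Ct / n) * S y) := h
    _ = Ct * S y := by field_simp
  have hSpos : ∀ y, 0 < S y := by
    intro y
    have h := hS1 y
    nlinarith [mul_pos hnR hw₀]
  have hA : ∀ y, Ct / ((n:ℝ) * ((Ct / n) * S y)) = 1 / S y := by
    intro y
    have h := (hSpos y).ne'
    field_simp
  set M : ℝ := ⨆ i : Fin n, |f (x i)| with hMdef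
  have hfM : ∀ i, |f (x i)| ≤ M := by
    intro i
    rw [hMdef]
    exact le_ciSup (Set.Finite.bddAbove (Set.finite_range fun j : Fin n => |f (x j)|)) i
  have hM0 : 0 ≤ M := le_trans (abs_nonneg _) (hfM ⟨0, hn⟩)
  have hgmeas : ∀ i, Measurable (g i) := by
    intro i
    exact hRmeas.comp
      (((continuous_id.sub continuous_const).norm.pow 2).div_const (4 * t)).measurable
  have hSmeas : Measurable S := Finset.measurable_sum _ fun i _ => hgmeas i
  have hhmeas : ∀ i, Measurable (fun y => g i y / S y) :=
    fun i => (hgmeas i).div hSmeas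
  have hhbound : ∀ i y, g i y / S y ≤ B * Ct / (n * w₀) := by
    intro i y
    rw [div_le_div_iff₀ (hSpos y) (by positivity)]
    calc g i y * ((n:ℝ) * w₀) ≤ B * ((n:ℝ) * w₀) :=
          mul_le_mul_of_nonneg_right (hgB i y) (by positivity)
    _ ≤ B * (Ct * S y) := by nlinarith [hS1 y]
    _ = B * Ct * S y := by ring
  have hhint : ∀ i, Integrable (fun y => g i y / S y) μ := by
    intro i
    refine Integrable.mono' (integrable_const (B * Ct / (n * w₀)))
      (hhmeas i).aestronglyMeasurable (ae_of_all _ fun y => ?_)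
    rw [Real.norm_eq_abs, abs_of_nonneg (div_nonneg (hg0 i y) (hSpos y).le)]
    exact hhbound i y
  have hhVn : ∀ i, (∫ y, g i y / S y ∂μ) ≤ V / n := by
    intro i
    have key : (fun y => Ct * g i y / ((Ct / n) * S y)) =
        fun y => (n:ℝ) * (g i y / S y) := by
      funext y
      have h := (hSpos y).ne'
      field_simp
    have h1 := hV' i
    rw [show (∫ y, Ct * R (‖y - x i‖ ^ 2 / (4 * t)) /
          ((Ct / n) * ∑ l, R (‖y - x l‖ ^ 2 / (4 * t))) ∂μ) =
        ∫ y, Ct * g i y / ((Ct / n) * S y) ∂μ from rfl, key,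
      integral_const_mul] at h1
    rw [le_div_iff₀ hnR]
    linarith
  set G : EuclideanSpace ℝ (Fin d) → ℝ :=
    fun y => 2 * (∑ i, g i y / S y * u i ^ 2) + 2 * t ^ 2 * (W' / w₀) ^ 2 * M ^ 2
    with hGdef
  have hGint : Integrable G μ := by
    refine Integrable.add ?_ (integrable_const _)
    exact (integrable_finset_sum _ fun i _ => (hhint i).mul_const _).const_mul 2
  -- pointwise bound
  have hFG : ∀ y, ((Ct / ((n : ℝ) * ((Ct / n) * ∑ i, R (‖y - x i‖ ^ 2 / (4 * t))))) *
          (∑ i, R (‖y - x i‖ ^ 2 / (4 * t)) * u i) +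
        (t * Ct / ((n : ℝ) * ((Ct / n) * ∑ i, R (‖y - x i‖ ^ 2 / (4 * t))))) *
          (∑ i, Rb (‖y - x i‖ ^ 2 / (4 * t)) * f (x i))) ^ 2 ≤ G y := by
    intro y
    have hS := hSpos y
    have e1 : Ct / ((n : ℝ) * ((Ct / n) * ∑ i, R (‖y - x i‖ ^ 2 / (4 * t)))) = 1 / S y :=
      hA y
    have e2 : t * Ct / ((n : ℝ) * ((Ct / n) * ∑ i, R (‖y - x i‖ ^ 2 / (4 * t)))) =
        t * (1 / S y) := by
      rw [mul_div_assoc, e1]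
    rw [e1, e2]
    set P : ℝ := ∑ i, g i y * u i with hPdef
    set Q : ℝ := ∑ i, gb i y * f (x i) with hQdef
    have key1 : (1 / S y * P) ^ 2 ≤ ∑ i, g i y / S y * u i ^ 2 := by
      have hcs : P ^ 2 ≤ S y * ∑ i, g i y * u i ^ 2 :=
        Finset.sum_sq_le_sum_mul_sum_of_sq_eq_mul Finset.univ
          (fun i _ => hg0 i y) (fun i _ => mul_nonneg (hg0 i y) (sq_nonneg _))
          (fun i _ => by ring)
      have heq : (∑ i, g i y / S y * u i ^ 2) * S y ^ 2 = S y * ∑ i, g i y * u i ^ 2 := by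
        rw [Finset.sum_mul, Finset.mul_sum]
        refine Finset.sum_congr rfl fun i _ => ?_
        field_simp
      have h2 : (1 / S y * P) ^ 2 = P ^ 2 / S y ^ 2 := by ring
      rw [h2, div_le_iff₀ (by positivity), heq]
      exact hcs
    have hSgb : ∑ i, gb i y ≤ W' * n / Ct := by
      have h := mul_le_mul_of_nonneg_left (hWbar y) hnR.le
      rw [le_div_iff₀ hCt]
      calc (∑ i, gb i y) * Ct = (n:ℝ) * ((Ct / n) * ∑ i, gb i y) := by
            field_simp
      _ ≤ (n:ℝ) * W' := h
      _ = W' * n := mul_comm _ _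
    have hQabs : |Q| ≤ M * (W' * n / Ct) := by
      calc |Q| ≤ ∑ i, |gb i y * f (x i)| := Finset.abs_sum_le_sum_abs _ _
      _ = ∑ i, gb i y * |f (x i)| := by
          refine Finset.sum_congr rfl fun i _ => ?_
          rw [abs_mul, abs_of_nonneg (hgb0 i y)]
      _ ≤ ∑ i, gb i y * M := by
          refine Finset.sum_le_sum fun i _ => ?_
          exact mul_le_mul_of_nonneg_left (hfM i) (hgb0 i y)
      _ = (∑ i, gb i y) * M := by rw [Finset.sum_mul]
      _ ≤ (W' * n / Ct) * M := mul_le_mul_of_nonneg_right hSgb hM0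
      _ = M * (W' * n / Ct) := mul_comm _ _
    have h1S : 1 / S y ≤ Ct / ((n:ℝ) * w₀) := by
      rw [div_le_div_iff₀ hS (by positivity)]
      have := hS1 y
      linarith
    have key2 : (t * (1 / S y) * Q) ^ 2 ≤ t ^ 2 * (W' / w₀) ^ 2 * M ^ 2 := by
      have hQ2 : Q ^ 2 ≤ (M * (W' * n / Ct)) ^ 2 := by
        rw [← sq_abs Q]
        exact pow_le_pow_left₀ (abs_nonneg _) hQabs 2
      have hs2 : (1 / S y) ^ 2 ≤ (Ct / ((n:ℝ) * w₀)) ^ 2 :=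
        pow_le_pow_left₀ (by positivity) h1S 2
      have heq : t ^ 2 * (Ct / ((n:ℝ) * w₀)) ^ 2 * (M * (W' * n / Ct)) ^ 2 =
          t ^ 2 * (W' / w₀) ^ 2 * M ^ 2 := by
        field_simp
      calc (t * (1 / S y) * Q) ^ 2 = t ^ 2 * (1 / S y) ^ 2 * Q ^ 2 := by ring
      _ = t ^ 2 * ((1 / S y) ^ 2 * Q ^ 2) := mul_assoc _ _ _
      _ ≤ t ^ 2 * ((Ct / ((n:ℝ) * w₀)) ^ 2 * (M * (W' * n / Ct)) ^ 2) :=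
          mul_le_mul_of_nonneg_left
            (mul_le_mul hs2 hQ2 (sq_nonneg _) (by positivity)) (sq_nonneg t)
      _ = t ^ 2 * (Ct / ((n:ℝ) * w₀)) ^ 2 * (M * (W' * n / Ct)) ^ 2 := (mul_assoc _ _ _).symm
      _ = t ^ 2 * (W' / w₀) ^ 2 * M ^ 2 := heq
    have hsum : (1 / S y * P + t * (1 / S y) * Q) ^ 2 ≤
        2 * (1 / S y * P) ^ 2 + 2 * (t * (1 / S y) * Q) ^ 2 := by
      nlinarith [sq_nonneg (1 / S y * P - t * (1 / S y) * Q)]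
    calc (1 / S y * P + t * (1 / S y) * Q) ^ 2
        ≤ 2 * (1 / S y * P) ^ 2 + 2 * (t * (1 / S y) * Q) ^ 2 := hsum
    _ ≤ 2 * (∑ i, g i y / S y * u i ^ 2) + 2 * (t ^ 2 * (W' / w₀) ^ 2 * M ^ 2) := by
        linarith [key1, key2]
    _ = G y := by rw [hGdef]; ring
  -- integrate
  have hInt : (∫ y, ((Ct / ((n : ℝ) * ((Ct / n) * ∑ i, R (‖y - x i‖ ^ 2 / (4 * t))))) *
          (∑ i, R (‖y - x i‖ ^ 2 / (4 * t)) * u i) +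
        (t * Ct / ((n : ℝ) * ((Ct / n) * ∑ i, R (‖y - x i‖ ^ 2 / (4 * t))))) *
          (∑ i, Rb (‖y - x i‖ ^ 2 / (4 * t)) * f (x i))) ^ 2 ∂μ) ≤ ∫ y, G y ∂μ :=
    integral_mono_of_nonneg (ae_of_all _ fun y => sq_nonneg _) hGint (ae_of_all _ hFG)
  refine le_trans hInt ?_
  rw [hGdef]
  rw [integral_add ((integrable_finset_sum _ fun i _ =>
      (hhint i).mul_const _).const_mul 2) (integrable_const _),
    integral_const_mul, integral_finset_sum _ fun i _ => (hhint i).mul_const _,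
    integral_const, smul_eq_mul]
  have hterm : ∀ i : Fin n, (∫ y, g i y / S y * u i ^ 2 ∂μ) ≤ V / n * u i ^ 2 := by
    intro i
    rw [integral_mul_const]
    exact mul_le_mul_of_nonneg_right (hhVn i) (sq_nonneg _)
  have h1 : 2 * ∑ i, (∫ y, g i y / S y * u i ^ 2 ∂μ) ≤ 2 * V / n * ∑ i, u i ^ 2 := by
    have : ∑ i, (∫ y, g i y / S y * u i ^ 2 ∂μ) ≤ ∑ i, V / n * u i ^ 2 :=
      Finset.sum_le_sum fun i _ => hterm i
    rw [← Finset.mul_sum] at this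
    calc 2 * ∑ i, (∫ y, g i y / S y * u i ^ 2 ∂μ) ≤ 2 * (V / n * ∑ i, u i ^ 2) := by
          linarith
    _ = 2 * V / n * ∑ i, u i ^ 2 := by ring
  have h2 : (μ Set.univ).toReal * (2 * t ^ 2 * (W' / w₀) ^ 2 * M ^ 2) =
      2 * t ^ 2 * (W' / w₀) ^ 2 * M ^ 2 * (μ Set.univ).toReal := mul_comm _ _
  rw [measureReal_def, h2]
  exact add_le_add_left h1 _
end
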